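/- arXiv:2505.10155 — 7 statements merged into one kernel-verified Lean document; each statement's English description precedes it below -/
import Mathlib

section
/- Let (K, ≼) be a weak AEC that is strongly κ⁺-categorical for some cardinal κ ≥ LS(K, ≼) + ℵ₀, let A ∈ K have cardinality κ, and let δ, γ < κ⁺ be limit ordinals with cf(δ) = cf(γ). If B is a (κ, δ)-(K, ≼)-limit model over A and C is a (κ, γ)-(K, ≼)-limit model over A, then there is an isomorphism f : B → C with f ↾ A = id_A. (Uniqueness part of Proposition 3.8.) -/
open FirstOrder Cardinal Set

universe u

/-- A structure for the language `L` whose carrier is a subset of the ambient type `U`. -/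
structure SStr (L : FirstOrder.Language.{u, u}) (U : Type u) where
  carrier : Set U
  str : L.Structure carrier

attribute [instance] SStr.str

namespace SStr

variable {L : FirstOrder.Language.{u, u}} {U : Type u}

/-- `A` is an `L`-substructure of `B`: the carrier of `A` is included in that of `B` and the
inclusion map is an `L`-embedding. -/
def Sub (A B : SStr L U) : Prop :=
  A.carrier ⊆ B.carrier ∧
    ∃ f : A.carrier ↪[L] B.carrier, ∀ x : A.carrier, (f x : U) = (x : U)

/-- An isomorphism `f : A ≃ B` restricts to an isomorphism of `C` (a substructure of `A`)
onto `D` (a substructure of `B`). -/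
def RestrictsTo {A B : SStr L U} (f : A.carrier ≃[L] B.carrier) (C D : SStr L U) : Prop :=
  ∃ g : C.carrier ≃[L] D.carrier,
    ∀ (x : C.carrier) (hx : (x : U) ∈ A.carrier), (g x : U) = (f ⟨x, hx⟩ : U)

end SStr

/-- `B` is the union of the chain `(A i)_{i < δ}`, as a structure: its carrier is the union of
the carriers and each `A i` is a substructure of `B`. -/
def IsUnionOf {L : FirstOrder.Language.{u, u}} {U : Type u} (δ : Ordinal.{u})
    (A : Ordinal.{u} → SStr L U) (B : SStr L U) : Prop :=
  B.carrier = ⋃ j ∈ Set.Iio δ, (A j).carrier ∧ ∀ i, i < δ → (A i).Sub B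

/-- An abstract class of `L`-structures (with carriers inside the ambient type `U`):
a class `K` together with a strong-substructure relation, closed under isomorphism,
with the strong relation a partial order refining the substructure relation. -/
structure AbstractClass (L : FirstOrder.Language.{u, u}) (U : Type u) where
  K : Set (SStr L U)
  strong : SStr L U → SStr L U → Prop
  mem_of_strong_left : ∀ {A B}, strong A B → A ∈ K
  mem_of_strong_right : ∀ {A B}, strong A B → B ∈ K
  iso_mem : ∀ {A B : SStr L U}, A ∈ K → Nonempty (A.carrier ≃[L] B.carrier) → B ∈ K
  iso_strong : ∀ {A B C D : SStr L U}, A ∈ K → strong C A →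
    ∀ f : A.carrier ≃[L] B.carrier, SStr.RestrictsTo f C D → D.Sub B → strong D B
  sub_of_strong : ∀ {A B}, strong A B → A.Sub B
  strong_refl : ∀ {A}, A ∈ K → strong A A
  strong_antisymm : ∀ {A B}, strong A B → strong B A → A = B
  strong_trans : ∀ {A B C}, strong A B → strong B C → strong A C

namespace AbstractClass

variable {L : FirstOrder.Language.{u, u}} {U : Type u}

/-- `(A i)_{i < δ}` is an increasing continuous strong chain of members of `K`. -/
def IsCtsChain (AC : AbstractClass L U) (δ : Ordinal.{u}) (A : Ordinal.{u} → SStr L U) : Prop :=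
  (∀ i, i < δ → A i ∈ AC.K) ∧
  (∀ i j, i < j → j < δ → AC.strong (A i) (A j)) ∧
  (∀ i, i < δ → Order.IsSuccLimit i → (A i).carrier = ⋃ j ∈ Set.Iio i, (A j).carrier)

/-- An `L`-embedding `f : C → B` is strong if its image, as a substructure of `B`,
is a strong substructure of `B`. -/
def IsStrongEmb (AC : AbstractClass L U) {C B : SStr L U} (f : C.carrier ↪[L] B.carrier) : Prop :=
  ∃ D : SStr L U, AC.strong D B ∧
    ∃ g : C.carrier ≃[L] D.carrier, ∀ x : C.carrier, (g x : U) = (f x : U)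

/-- `B` is `(K, ≼)`-universal over `A`. -/
def UnivOver (AC : AbstractClass L U) (B A : SStr L U) : Prop :=
  ∀ C ∈ AC.K, AC.strong A C → #C.carrier = #A.carrier →
    ∃ f : C.carrier ↪[L] B.carrier,
      AC.IsStrongEmb f ∧ ∀ x : C.carrier, (x : U) ∈ A.carrier → (f x : U) = (x : U)

/-- `M` is a `(K, ≼)`-universal model. -/
def IsUniversal (AC : AbstractClass L U) (M : SStr L U) : Prop :=
  ∀ C ∈ AC.K, #C.carrier ≤ #M.carrier →
    ∃ f : C.carrier ↪[L] M.carrier, AC.IsStrongEmb f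

/-- `B` is a `(κ, δ)-(K, ≼)`-limit model over `A`. -/
def IsLimitModelOver (AC : AbstractClass L U) (κ : Cardinal.{u}) (δ : Ordinal.{u})
    (B A : SStr L U) : Prop :=
  ∃ c : Ordinal.{u} → SStr L U,
    c 0 = A ∧
    AC.IsCtsChain δ c ∧
    IsUnionOf δ c B ∧
    (∀ i, i < δ → AC.UnivOver (c (i + 1)) (c i)) ∧
    (∀ i, i < δ → #(c i).carrier = κ)

/-- `(K, ≼)` is strongly `κ⁺`-categorical. -/
def StronglyCat (AC : AbstractClass L U) (κ : Cardinal.{u}) : Prop :=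
  (∃ F ∈ AC.K, #F.carrier = Order.succ κ ∧
      ∀ A ∈ AC.K, #A.carrier = Order.succ κ → Nonempty (A.carrier ≃[L] F.carrier)) ∧
  (∀ A ∈ AC.K, #A.carrier = κ → ∃ B ∈ AC.K, #B.carrier = κ ∧ A ≠ B ∧ AC.strong A B) ∧
  (∀ A ∈ AC.K, #A.carrier = κ → ∃ B ∈ AC.K, #B.carrier = κ ∧ AC.UnivOver B A)

end AbstractClass

/-- A weak AEC: an abstract class closed under unions of continuous strong chains, with a
Löwenheim–Skolem number. Neither Smoothness nor Coherence is assumed. -/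
structure WeakAEC (L : FirstOrder.Language.{u, u}) (U : Type u) extends AbstractClass L U where
  LS : Cardinal.{u}
  LS_ge : L.card + ℵ₀ ≤ LS
  chain_union : ∀ δ : Ordinal.{u}, Order.IsSuccLimit δ → ∀ A : Ordinal.{u} → SStr L U,
    toAbstractClass.IsCtsChain δ A →
    ∃ B, IsUnionOf δ A B ∧ B ∈ K ∧ ∀ i, i < δ → strong (A i) B
  ls : ∀ A ∈ K, ∀ s : Set U, s ⊆ A.carrier →
    ∃ C ∈ K, s ⊆ C.carrier ∧ strong C A ∧ #C.carrier ≤ #s + LS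

namespace LMP

open FirstOrder Cardinal Set

variable {L : FirstOrder.Language.{u, u}} {U : Type u}

/-- The inclusion embedding coming from `SStr.Sub`. -/
noncomputable def subEmb {X Y : SStr L U} (h : X.Sub Y) : X.carrier ↪[L] Y.carrier :=
  h.2.choose

lemma subEmb_val {X Y : SStr L U} (h : X.Sub Y) (x : X.carrier) :
    (subEmb h x : U) = (x : U) :=
  h.2.choose_spec x

/-- A surjective embedding gives an isomorphism. -/
lemma equiv_of_surj {P Q : SStr L U} (f : P.carrier ↪[L] Q.carrier)
    (h : Function.Surjective f) :
    ∃ g : P.carrier ≃[L] Q.carrier, ∀ x, g x = f x := by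
  refine ⟨{ toEquiv := Equiv.ofBijective f ⟨f.injective, h⟩,
            map_fun' := f.map_fun', map_rel' := f.map_rel' }, fun x => rfl⟩

/-- Renaming a structure along an injection of its carrier into `U`. -/
lemma rename (X : SStr L U) (ψ : X.carrier → U) (hψ : Function.Injective ψ) :
    ∃ (E : SStr L U) (g : X.carrier ≃[L] E.carrier),
      E.carrier = Set.range ψ ∧ ∀ x, (g x : U) = ψ x := by
  letI : L.Structure (Set.range ψ) := (Equiv.ofInjective ψ hψ).inducedStructure
  refine ⟨⟨Set.range ψ, this⟩, (Equiv.ofInjective ψ hψ).inducedStructureEquiv, rfl,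
    fun x => rfl⟩

end LMP

namespace LMP

open FirstOrder Cardinal Set FirstOrder.Language.Structure

variable {L : FirstOrder.Language.{u, u}} {U : Type u}

lemma union_emb (ρ : Ordinal.{u}) (hρ : 0 < ρ) (X Y : Ordinal.{u} → SStr L U)
    (P Q : SStr L U)
    (hXmono : ∀ β β', β ≤ β' → β' < ρ → (X β).carrier ⊆ (X β').carrier)
    (hXP : ∀ β, β < ρ → (X β).Sub P)
    (hYQ : ∀ β, β < ρ → (Y β).Sub Q)
    (hcover : P.carrier ⊆ ⋃ β ∈ Set.Iio ρ, (X β).carrier)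
    (e : ∀ β, β < ρ → ((X β).carrier ↪[L] (Y β).carrier))
    (hcoh : ∀ β β' (hββ' : β ≤ β') (hβ' : β' < ρ) (x : (X β').carrier)
      (hx : (x : U) ∈ (X β).carrier),
      (e β' hβ' x : U) = (e β (lt_of_le_of_lt hββ' hβ') ⟨(x : U), hx⟩ : U)) :
    ∃ f : P.carrier ↪[L] Q.carrier,
      ∀ β (hβ : β < ρ) (x : P.carrier) (hx : (x : U) ∈ (X β).carrier),
        (f x : U) = (e β hβ ⟨(x : U), hx⟩ : U) := by
  classical
  have hex : ∀ x : P.carrier, ∃ β, β < ρ ∧ (x : U) ∈ (X β).carrier := by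
    intro x
    have := hcover x.2
    simp only [Set.mem_iUnion, Set.mem_Iio] at this
    obtain ⟨β, hβ, hx⟩ := this
    exact ⟨β, hβ, hx⟩
  choose idx idxlt idxmem using hex
  set v : P.carrier → U := fun x => (e (idx x) (idxlt x) ⟨(x : U), idxmem x⟩ : U) with hv
  -- agreement of `v` with any index containing `x`
  have hagree : ∀ (x : P.carrier) (β) (hβ : β < ρ) (hx : (x : U) ∈ (X β).carrier),
      v x = (e β hβ ⟨(x : U), hx⟩ : U) := by
    intro x β hβ hx
    rcases le_total (idx x) β with h | h
    · rw [hcoh (idx x) β h hβ ⟨(x : U), hx⟩ (idxmem x)]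
    · rw [hv]
      simp only
      rw [hcoh β (idx x) h (idxlt x) ⟨(x : U), idxmem x⟩ hx]
  have hvmem : ∀ x, v x ∈ Q.carrier := fun x =>
    (hYQ _ (idxlt x)).1 (e (idx x) (idxlt x) ⟨(x : U), idxmem x⟩).2
  -- a common index for finitely many elements
  have hcommon : ∀ {n : ℕ} (xs : Fin n → P.carrier), ∃ β, ∃ hβ : β < ρ,
      ∀ k, ((xs k : U)) ∈ (X β).carrier := by
    intro n xs
    have hlt : (Finset.univ.sup fun k => idx (xs k)) < ρ := by
      rw [Finset.sup_lt_iff (show ⊥ < ρ from hρ)]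
      exact fun k _ => idxlt (xs k)
    refine ⟨Finset.univ.sup fun k => idx (xs k), hlt, fun k => ?_⟩
    exact hXmono _ _ (Finset.le_sup (Finset.mem_univ k)) hlt (idxmem (xs k))
  -- the underlying injective function
  have hinj : Function.Injective (fun x : P.carrier => v x) := by
    intro x y hxy
    obtain ⟨β, hβ, hmem⟩ := hcommon ![x, y]
    have hx : (x : U) ∈ (X β).carrier := by simpa using hmem 0
    have hy : (y : U) ∈ (X β).carrier := by simpa using hmem 1
    have h1 : (e β hβ ⟨(x : U), hx⟩ : U) = (e β hβ ⟨(y : U), hy⟩ : U) := by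
      rw [← hagree x β hβ hx, ← hagree y β hβ hy]; exact hxy
    have h2 := (e β hβ).injective (Subtype.ext h1)
    have h3 : (x : U) = (y : U) := by simpa using congrArg Subtype.val h2
    exact Subtype.ext h3
  -- main construction
  refine ⟨{ toFun := fun x => ⟨v x, hvmem x⟩,
            inj' := ?_, map_fun' := ?_, map_rel' := ?_ }, ?_⟩
  · intro x y hxy
    exact hinj (congrArg Subtype.val hxy)
  · intro n φ xs
    obtain ⟨β, hβ, hmem⟩ := hcommon xs
    have hSubP := hXP β hβ
    have hSubQ := hYQ β hβ
    have hmem' : ∀ k, v (xs k) ∈ Q.carrier := fun k => hvmem (xs k)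
    set xs' : Fin n → (X β).carrier := fun k => ⟨(xs k : U), hmem k⟩ with hxs'
    have h1 : xs = (subEmb hSubP) ∘ xs' := by
      funext k; exact Subtype.ext (subEmb_val hSubP (xs' k)).symm
    have h2 : funMap φ xs = (subEmb hSubP) (funMap φ xs') := by
      calc funMap φ xs = funMap φ ((subEmb hSubP) ∘ xs') := congrArg _ h1
      _ = (subEmb hSubP) (funMap φ xs') := ((subEmb hSubP).map_fun φ xs').symm
    have hval : ((funMap φ xs : P.carrier) : U)
        = ((funMap φ xs' : (X β).carrier) : U) := by
      rw [h2]; exact subEmb_val hSubP _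
    have hz : ((funMap φ xs : P.carrier) : U) ∈ (X β).carrier := by
      rw [hval]; exact (funMap φ xs' : (X β).carrier).2
    have h3 : (⟨((funMap φ xs : P.carrier) : U), hz⟩ : (X β).carrier)
        = funMap φ xs' := Subtype.ext hval
    have h4 : ((fun x : P.carrier => (⟨v x, hvmem x⟩ : Q.carrier)) ∘ xs)
        = (subEmb hSubQ) ∘ ((e β hβ) ∘ xs') := by
      funext k
      apply Subtype.ext
      show v (xs k) = _
      rw [hagree (xs k) β hβ (hmem k)]
      exact (subEmb_val hSubQ _).symm
    have h5 : funMap φ ((subEmb hSubQ) ∘ ((e β hβ) ∘ xs'))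
        = (subEmb hSubQ) (e β hβ (funMap φ xs')) := by
      rw [(e β hβ).map_fun φ xs']
      exact ((subEmb hSubQ).map_fun _ _).symm
    apply Subtype.ext
    show v (funMap φ xs)
        = ((funMap φ ((fun x : P.carrier => (⟨v x, hvmem x⟩ : Q.carrier)) ∘ xs)
            : Q.carrier) : U)
    calc v (funMap φ xs) = ((e β hβ ⟨((funMap φ xs : P.carrier) : U), hz⟩ : (Y β).carrier) : U) :=
          hagree _ β hβ hz
      _ = ((e β hβ (funMap φ xs') : (Y β).carrier) : U) := by rw [h3]
      _ = (((subEmb hSubQ) (e β hβ (funMap φ xs')) : Q.carrier) : U) :=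
          (subEmb_val hSubQ _).symm
      _ = ((funMap φ ((subEmb hSubQ) ∘ ((e β hβ) ∘ xs')) : Q.carrier) : U) := by rw [h5]
      _ = ((funMap φ ((fun x : P.carrier => (⟨v x, hvmem x⟩ : Q.carrier)) ∘ xs)
            : Q.carrier) : U) := by rw [h4]
  · intro n r xs
    obtain ⟨β, hβ, hmem⟩ := hcommon xs
    have hSubP := hXP β hβ
    have hSubQ := hYQ β hβ
    set xs' : Fin n → (X β).carrier := fun k => ⟨(xs k : U), hmem k⟩ with hxs'
    have h1 : xs = (subEmb hSubP) ∘ xs' := by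
      funext k; exact Subtype.ext (subEmb_val hSubP (xs' k)).symm
    have h4 : ((fun x : P.carrier => (⟨v x, hvmem x⟩ : Q.carrier)) ∘ xs)
        = (subEmb hSubQ) ∘ ((e β hβ) ∘ xs') := by
      funext k
      apply Subtype.ext
      show v (xs k) = _
      rw [hagree (xs k) β hβ (hmem k)]
      exact (subEmb_val hSubQ _).symm
    show RelMap r ((fun x : P.carrier => (⟨v x, hvmem x⟩ : Q.carrier)) ∘ xs) ↔ RelMap r xs
    rw [h4, (subEmb hSubQ).map_rel, (e β hβ).map_rel, h1, (subEmb hSubP).map_rel]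
  · intro β hβ x hx
    exact hagree x β hβ hx

end LMP

namespace LMP

open FirstOrder Cardinal Set FirstOrder.Language.Structure

variable {L : FirstOrder.Language.{u, u}} {U : Type u}

lemma lift_strongEmb (AC : AbstractClass L U) {Y Z Z' : SStr L U}
    (g : Y.carrier ↪[L] Z.carrier) (hg : AC.IsStrongEmb g) (hZZ' : AC.strong Z Z') :
    ∃ g' : Y.carrier ↪[L] Z'.carrier, AC.IsStrongEmb g' ∧ ∀ y, (g' y : U) = (g y : U) := by
  obtain ⟨D, hD, h, hh⟩ := hg
  have hsub := AC.sub_of_strong hZZ'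
  refine ⟨(subEmb hsub).comp g, ⟨D, AC.strong_trans hD hZZ', h, fun y => ?_⟩, fun y => ?_⟩
  · rw [hh y]
    exact (subEmb_val hsub (g y)).symm
  · exact subEmb_val hsub (g y)

lemma step_lemma (AC : AbstractClass L U) {κ : Cardinal.{u}} (hκinf : ℵ₀ ≤ κ)
    (hU : Order.succ κ ≤ #U) {X Y X' : SStr L U}
    (f : X.carrier ↪[L] Y.carrier) (hf : AC.IsStrongEmb f)
    (hXcard : #X.carrier = κ) (hYcard : #Y.carrier = κ)
    (huniv : AC.UnivOver X' X) :
    ∃ g : Y.carrier ↪[L] X'.carrier, AC.IsStrongEmb g ∧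
      ∀ x : X.carrier, (g (f x) : U) = (x : U) := by
  classical
  obtain ⟨D, hD, h, hh⟩ := hf
  have hDsub : D.Sub Y := AC.sub_of_strong hD
  -- room in `U` outside `X.carrier`
  have hroom : Order.succ κ ≤ #(X.carrierᶜ : Set U) := by
    by_contra hcon
    push_neg at hcon
    have h1 : #(X.carrierᶜ : Set U) ≤ κ := Order.lt_succ_iff.mp hcon
    have h2 : #U ≤ κ := by
      calc #U = #X.carrier + #(X.carrierᶜ : Set U) := (Cardinal.mk_sum_compl _).symm
      _ ≤ κ + κ := by rw [hXcard]; exact add_le_add le_rfl h1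
      _ = κ := Cardinal.add_eq_self hκinf
    exact absurd (hU.trans h2) (by simp [Order.lt_succ_iff])
  have hYle : #Y.carrier ≤ #(X.carrierᶜ : Set U) :=
    hYcard.le.trans ((Order.le_succ κ).trans hroom)
  obtain ⟨φ₀⟩ := Cardinal.le_def _ _ |>.mp hYle
  -- the renaming map
  set ψ : Y.carrier → U := fun y =>
    if hy : (y : U) ∈ D.carrier then ((h.symm ⟨(y : U), hy⟩ : X.carrier) : U)
    else ((φ₀ y : (X.carrierᶜ : Set U)) : U) with hψdef
  have hψD : ∀ (y : Y.carrier) (hy : (y : U) ∈ D.carrier),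
      ψ y = ((h.symm ⟨(y : U), hy⟩ : X.carrier) : U) := fun y hy => dif_pos hy
  have hψnD : ∀ (y : Y.carrier), ¬((y : U) ∈ D.carrier) →
      ψ y = ((φ₀ y : (X.carrierᶜ : Set U)) : U) := fun y hy => dif_neg hy
  have hψmemX : ∀ (y : Y.carrier) (hy : (y : U) ∈ D.carrier), ψ y ∈ X.carrier := by
    intro y hy; rw [hψD y hy]; exact (h.symm ⟨(y : U), hy⟩).2
  have hψinj : Function.Injective ψ := by
    intro y z hyz
    by_cases hy : (y : U) ∈ D.carrier <;> by_cases hz : (z : U) ∈ D.carrier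
    · rw [hψD y hy, hψD z hz] at hyz
      have h2 := h.symm.injective (Subtype.ext hyz)
      have h3 : (y : U) = (z : U) := by simpa using congrArg Subtype.val h2
      exact Subtype.ext h3
    · exfalso
      apply (φ₀ z).2
      rw [← hψnD z hz, ← hyz]
      exact hψmemX y hy
    · exfalso
      apply (φ₀ y).2
      rw [← hψnD y hy, hyz]
      exact hψmemX z hz
    · rw [hψnD y hy, hψnD z hz] at hyz
      exact φ₀.injective (Subtype.ext hyz)
  obtain ⟨E, g0, hEc, hg0⟩ := rename Y ψ hψinj
  -- X is a substructure of E
  have hXsubE : X.Sub E := by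
    constructor
    · intro x hx
      rw [hEc]
      have hyD : ((subEmb hDsub (h ⟨x, hx⟩) : Y.carrier) : U) ∈ D.carrier := by
        rw [subEmb_val]; exact (h ⟨x, hx⟩).2
      refine ⟨subEmb hDsub (h ⟨x, hx⟩), ?_⟩
      rw [hψD _ hyD]
      have : (⟨((subEmb hDsub (h ⟨x, hx⟩) : Y.carrier) : U), hyD⟩ : D.carrier) = h ⟨x, hx⟩ :=
        Subtype.ext (subEmb_val hDsub _)
      rw [this, h.symm_apply_apply]
    · refine ⟨g0.toEmbedding.comp ((subEmb hDsub).comp h.toEmbedding), fun x => ?_⟩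
      show (g0 (subEmb hDsub (h x)) : U) = (x : U)
      rw [hg0]
      have hyD : ((subEmb hDsub (h x) : Y.carrier) : U) ∈ D.carrier := by
        rw [subEmb_val]; exact (h x).2
      rw [hψD _ hyD]
      have : (⟨((subEmb hDsub (h x) : Y.carrier) : U), hyD⟩ : D.carrier) = h x :=
        Subtype.ext (subEmb_val hDsub _)
      rw [this, h.symm_apply_apply]
  have hYK : Y ∈ AC.K := AC.mem_of_strong_right hD
  have hEK : E ∈ AC.K := AC.iso_mem hYK ⟨g0⟩
  -- the copy X of D is strong in E
  have hrestr : SStr.RestrictsTo g0 D X := by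
    refine ⟨h.symm, fun d hd => ?_⟩
    rw [hg0]
    rw [hψD ⟨(d : U), hd⟩ d.2]
  have hXE : AC.strong X E := AC.iso_strong hYK hD g0 hrestr hXsubE
  have hEcard : #E.carrier = #X.carrier := by
    rw [hXcard, ← hYcard]
    exact (Cardinal.mk_congr g0.toEquiv).symm
  obtain ⟨ψ', hψ'strong, hψ'fix⟩ := huniv E hEK hXE hEcard
  refine ⟨ψ'.comp g0.toEmbedding, ?_, ?_⟩
  · obtain ⟨D2, hD2, g2, hg2⟩ := hψ'strong
    exact ⟨D2, hD2, g2.comp g0, fun y => hg2 (g0 y)⟩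
  · intro x
    have hfxD : (f x : U) ∈ D.carrier := by rw [← hh x]; exact (h x).2
    have hval : (g0 (f x) : U) = (x : U) := by
      rw [hg0, hψD _ hfxD]
      have : (⟨((f x : Y.carrier) : U), hfxD⟩ : D.carrier) = h x := Subtype.ext (hh x).symm
      rw [this, h.symm_apply_apply]
    have hmem : (g0 (f x) : U) ∈ X.carrier := by rw [hval]; exact x.2
    show (ψ' (g0 (f x)) : U) = (x : U)
    rw [hψ'fix (g0 (f x)) hmem, hval]

end LMP

namespace LMP

open FirstOrder Cardinal Set FirstOrder.Language.Structure

variable {L : FirstOrder.Language.{u, u}} {U : Type u}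

lemma chain_strong_le (AC : AbstractClass L U) {δ : Ordinal.{u}} {b : Ordinal.{u} → SStr L U}
    (h : AC.IsCtsChain δ b) {i j : Ordinal.{u}} (hij : i ≤ j) (hj : j < δ) :
    AC.strong (b i) (b j) := by
  rcases hij.lt_or_eq with h' | rfl
  · exact h.2.1 i j h' hj
  · exact AC.strong_refl (h.1 i hj)

lemma chain_subset_le (AC : AbstractClass L U) {δ : Ordinal.{u}} {b : Ordinal.{u} → SStr L U}
    (h : AC.IsCtsChain δ b) {i j : Ordinal.{u}} (hij : i ≤ j) (hj : j < δ) :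
    (b i).carrier ⊆ (b j).carrier :=
  (AC.sub_of_strong (chain_strong_le AC h hij hj)).1

/-- All the data and hypotheses for the back-and-forth construction. -/
structure Setup (L : FirstOrder.Language.{u, u}) (U : Type u) : Type (u + 1) where
  W : WeakAEC L U
  κ : Cardinal.{u}
  A : SStr L U
  δ : Ordinal.{u}
  γ : Ordinal.{u}
  b : Ordinal.{u} → SStr L U
  c : Ordinal.{u} → SStr L U
  s : Ordinal.{u} → Ordinal.{u}
  t : Ordinal.{u} → Ordinal.{u}
  hκinf : ℵ₀ ≤ κ
  hU : Order.succ κ ≤ #U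
  hδ : Order.IsSuccLimit δ
  hγ : Order.IsSuccLimit γ
  hb0 : b 0 = A
  hc0 : c 0 = A
  hbchain : W.toAbstractClass.IsCtsChain δ b
  hcchain : W.toAbstractClass.IsCtsChain γ c
  hbuniv : ∀ i, i < δ → W.toAbstractClass.UnivOver (b (i + 1)) (b i)
  hcuniv : ∀ i, i < γ → W.toAbstractClass.UnivOver (c (i + 1)) (c i)
  hbcard : ∀ i, i < δ → #(b i).carrier = κ
  hccard : ∀ i, i < γ → #(c i).carrier = κ
  hs : ∀ β, s β < δ
  ht : ∀ β, t β < γ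

/-- A stage of the zigzag construction. -/
structure Stage (S : Setup L U) : Type (u + 1) where
  i : Ordinal.{u}
  j : Ordinal.{u}
  f : (S.b i).carrier ↪[L] (S.c j).carrier

noncomputable instance (S : Setup L U) : Inhabited (Stage S) :=
  ⟨⟨0, 0, by rw [S.hb0, S.hc0]⟩⟩

/-- The invariants a new stage must satisfy with respect to all previous stages. -/
def Ext (S : Setup L U) (α : Ordinal.{u}) (F : Ordinal.{u} → Stage S) (st : Stage S) : Prop :=
  st.i < S.δ ∧ st.j < S.γ ∧ 0 < st.i ∧ 0 < st.j ∧
  S.W.toAbstractClass.IsStrongEmb st.f ∧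
  (∀ x : (S.b st.i).carrier, (x : U) ∈ S.A.carrier → (st.f x : U) = (x : U)) ∧
  (∀ β, β < α → (F β).i < st.i ∧ (F β).j < st.j ∧ S.s β < st.i ∧ S.t β < st.j) ∧
  (∀ β, β < α → ∀ (x : (S.b st.i).carrier) (hx : (x : U) ∈ (S.b (F β).i).carrier),
      (st.f x : U) = ((F β).f ⟨(x : U), hx⟩ : U)) ∧
  (∀ β, β < α → (S.c (F β).j).carrier ⊆ Subtype.val '' Set.range st.f)

lemma ext_congr {S : Setup L U} {α : Ordinal.{u}} {F F' : Ordinal.{u} → Stage S}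
    (hFF : ∀ β, β < α → F β = F' β) {st : Stage S} (h : Ext S α F st) :
    Ext S α F' st := by
  obtain ⟨h1, h2, h3, h4, h5, h6, h7, h8, h9⟩ := h
  refine ⟨h1, h2, h3, h4, h5, h6, ?_, ?_, ?_⟩
  · intro β hβ; rw [← hFF β hβ]; exact h7 β hβ
  · intro β hβ; rw [← hFF β hβ]; exact h8 β hβ
  · intro β hβ; rw [← hFF β hβ]; exact h9 β hβ

end LMP

namespace LMP

open FirstOrder Cardinal Set FirstOrder.Language.Structure

variable {L : FirstOrder.Language.{u, u}} {U : Type u}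

lemma exists_ext_zero (S : Setup L U) (F : Ordinal.{u} → Stage S) :
    ∃ st, Ext S 0 F st := by
  have h1δ : (1 : Ordinal) < S.δ := Ordinal.one_lt_of_isSuccLimit S.hδ
  have h1γ : (1 : Ordinal) < S.γ := Ordinal.one_lt_of_isSuccLimit S.hγ
  have hstrong01 : S.W.toAbstractClass.strong (S.b 0) (S.b 1) :=
    S.hbchain.2.1 0 1 zero_lt_one h1δ
  have hsub01 := S.W.toAbstractClass.sub_of_strong hstrong01
  have hincl_strong : S.W.toAbstractClass.IsStrongEmb (subEmb hsub01) :=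
    ⟨S.b 0, hstrong01, FirstOrder.Language.Equiv.refl L _,
      fun x => (subEmb_val hsub01 x).symm⟩
  have huniv : S.W.toAbstractClass.UnivOver (S.c 1) (S.b 0) := by
    rw [S.hb0, ← S.hc0]
    have := S.hcuniv 0 S.hγ.pos
    rwa [zero_add] at this
  obtain ⟨f0, hf0strong, hf0fix⟩ := step_lemma S.W.toAbstractClass S.hκinf S.hU
    (subEmb hsub01) hincl_strong (S.hbcard 0 S.hδ.pos) (S.hbcard 1 h1δ) huniv
  refine ⟨⟨1, 1, f0⟩, h1δ, h1γ, zero_lt_one, zero_lt_one, hf0strong, ?_,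
    fun β hβ => absurd hβ ((zero_le (a := β)).not_gt), fun β hβ => absurd hβ ((zero_le (a := β)).not_gt),
    fun β hβ => absurd hβ ((zero_le (a := β)).not_gt)⟩
  intro x hx
  have hx0 : (x : U) ∈ (S.b 0).carrier := by rw [S.hb0]; exact hx
  have hxe : x = subEmb hsub01 ⟨(x : U), hx0⟩ := Subtype.ext (subEmb_val hsub01 ⟨(x : U), hx0⟩).symm
  show (f0 x : U) = (x : U)
  calc (f0 x : U) = (f0 (subEmb hsub01 ⟨(x : U), hx0⟩) : U) := by rw [← hxe]
  _ = ((⟨(x : U), hx0⟩ : (S.b 0).carrier) : U) := hf0fix _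

end LMP

namespace LMP

open FirstOrder Cardinal Set FirstOrder.Language.Structure

variable {L : FirstOrder.Language.{u, u}} {U : Type u}

lemma exists_ext_succ (S : Setup L U) (α₀ : Ordinal.{u}) (F : Ordinal.{u} → Stage S)
    (IH : Ext S α₀ F (F α₀)) : ∃ st, Ext S (Order.succ α₀) F st := by
  obtain ⟨hi₀, hj₀, hi₀pos, hj₀pos, hf₀strong, hf₀A, hmono₀, hcoh₀, hrange₀⟩ := IH
  have hlt_add_one : ∀ x : Ordinal.{u}, x < x + 1 := fun x => by
    rw [Ordinal.add_one_eq_succ]; exact Order.lt_succ x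
  have hi₀1 : (F α₀).i + 1 < S.δ := by
    rw [Ordinal.add_one_eq_succ]; exact S.hδ.succ_lt hi₀
  have hj₀1 : (F α₀).j + 1 < S.γ := by
    rw [Ordinal.add_one_eq_succ]; exact S.hγ.succ_lt hj₀
  -- first half-step
  obtain ⟨g1, hg1strong, hg1fix⟩ := step_lemma S.W.toAbstractClass S.hκinf S.hU
    (F α₀).f hf₀strong (S.hbcard _ hi₀) (S.hccard _ hj₀) (S.hbuniv _ hi₀)
  set i₁ := max ((F α₀).i + 1) (S.s α₀ + 1) with hi₁def
  have hi₁ : i₁ < S.δ := by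
    apply max_lt hi₀1
    rw [Ordinal.add_one_eq_succ]; exact S.hδ.succ_lt (S.hs α₀)
  have hi₀lt : (F α₀).i < i₁ := lt_of_lt_of_le (hlt_add_one _) (le_max_left _ _)
  obtain ⟨g1', hg1'strong, hg1'val⟩ := lift_strongEmb S.W.toAbstractClass g1 hg1strong
    (chain_strong_le _ S.hbchain (le_max_left _ _) hi₁)
  -- second half-step
  obtain ⟨f1, hf1strong, hf1fix⟩ := step_lemma S.W.toAbstractClass S.hκinf S.hU
    g1' hg1'strong (S.hccard _ hj₀) (S.hbcard _ hi₁) (S.hcuniv _ hj₀)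
  set j₁ := max ((F α₀).j + 1) (S.t α₀ + 1) with hj₁def
  have hj₁ : j₁ < S.γ := by
    apply max_lt hj₀1
    rw [Ordinal.add_one_eq_succ]; exact S.hγ.succ_lt (S.ht α₀)
  have hj₀lt : (F α₀).j < j₁ := lt_of_lt_of_le (hlt_add_one _) (le_max_left _ _)
  obtain ⟨f1', hf1'strong, hf1'val⟩ := lift_strongEmb S.W.toAbstractClass f1 hf1strong
    (chain_strong_le _ S.hcchain (le_max_left _ _) hj₁)
  -- `f1'` extends `(F α₀).f`
  have hgf : ∀ x : (S.b (F α₀).i).carrier, (g1' ((F α₀).f x) : U) = (x : U) := by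
    intro x; rw [hg1'val, hg1fix]
  have hkey : ∀ (x : (S.b i₁).carrier) (hx : (x : U) ∈ (S.b (F α₀).i).carrier),
      (f1' x : U) = ((F α₀).f ⟨(x : U), hx⟩ : U) := by
    intro x hx
    have hxe : x = g1' ((F α₀).f ⟨(x : U), hx⟩) := Subtype.ext (hgf ⟨(x : U), hx⟩).symm
    calc (f1' x : U) = (f1' (g1' ((F α₀).f ⟨(x : U), hx⟩)) : U) := by rw [← hxe]
    _ = (f1 (g1' ((F α₀).f ⟨(x : U), hx⟩)) : U) := hf1'val _
    _ = ((F α₀).f ⟨(x : U), hx⟩ : U) := hf1fix _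
  refine ⟨⟨i₁, j₁, f1'⟩, hi₁, hj₁, lt_of_lt_of_le hi₀pos (le_of_lt hi₀lt),
    lt_of_lt_of_le hj₀pos (le_of_lt hj₀lt), hf1'strong, ?_, ?_, ?_, ?_⟩
  · -- fixes A
    intro x hx
    have hx0 : (x : U) ∈ (S.b (F α₀).i).carrier := by
      apply chain_subset_le _ S.hbchain zero_le hi₀
      rw [S.hb0]; exact hx
    show (f1' x : U) = (x : U)
    rw [hkey x hx0]
    exact hf₀A ⟨(x : U), hx0⟩ hx
  · -- monotonicity and cofinality clauses
    intro β hβ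
    rcases (Order.lt_succ_iff.mp hβ).lt_or_eq with hβ' | rfl
    · obtain ⟨m1, m2, m3, m4⟩ := hmono₀ β hβ'
      exact ⟨m1.trans hi₀lt, m2.trans hj₀lt, m3.trans hi₀lt, m4.trans hj₀lt⟩
    · exact ⟨hi₀lt, hj₀lt, lt_of_lt_of_le (hlt_add_one _) (le_max_right _ _),
        lt_of_lt_of_le (hlt_add_one _) (le_max_right _ _)⟩
  · -- coherence
    intro β hβ x hx
    rcases (Order.lt_succ_iff.mp hβ).lt_or_eq with hβ' | rfl
    · have hx0 : (x : U) ∈ (S.b (F α₀).i).carrier :=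
        chain_subset_le _ S.hbchain (le_of_lt (hmono₀ β hβ').1) hi₀ hx
      show (f1' x : U) = _
      rw [hkey x hx0]
      exact hcoh₀ β hβ' ⟨(x : U), hx0⟩ hx
    · exact hkey x hx
  · -- range
    intro β hβ y hy
    have hjle : (F β).j ≤ (F α₀).j := by
      rcases (Order.lt_succ_iff.mp hβ).lt_or_eq with hβ' | rfl
      · exact le_of_lt (hmono₀ β hβ').2.1
      · exact le_rfl
    have hy₀ : y ∈ (S.c (F α₀).j).carrier := chain_subset_le _ S.hcchain hjle hj₀ hy
    refine ⟨f1' (g1' ⟨y, hy₀⟩), ⟨g1' ⟨y, hy₀⟩, rfl⟩, ?_⟩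
    show (f1' (g1' ⟨y, hy₀⟩) : U) = y
    rw [hf1'val, hf1fix]

end LMP

namespace LMP

open FirstOrder Cardinal Set FirstOrder.Language.Structure

variable {L : FirstOrder.Language.{u, u}} {U : Type u}

lemma exists_ext_limit (S : Setup L U) (α : Ordinal.{u}) (hα : Order.IsSuccLimit α)
    (hcardδ : α.card < S.δ.cof) (hcardγ : α.card < S.γ.cof)
    (F : Ordinal.{u} → Stage S)
    (IH : ∀ β, β < α → Ext S β F (F β)) : ∃ st, Ext S α F st := by
  have hlt_add_one : ∀ x : Ordinal.{u}, x < x + 1 := fun x => by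
    rw [Ordinal.add_one_eq_succ]; exact Order.lt_succ x
  have hsucclt : ∀ β, β < α → β + 1 < α := fun β h => by
    rw [Ordinal.add_one_eq_succ]; exact hα.succ_lt h
  set i₁ := Ordinal.bsup.{u, u} α (fun β _ => (F β).i) with hi₁def
  set j₁ := Ordinal.bsup.{u, u} α (fun β _ => (F β).j) with hj₁def
  have hi₁δ : i₁ < S.δ := Ordinal.bsup_lt_ord hcardδ (fun β h => (IH β h).1)
  have hj₁γ : j₁ < S.γ := Ordinal.bsup_lt_ord hcardγ (fun β h => (IH β h).2.1)
  have himono : ∀ β β', β < β' → β' < α → (F β).i < (F β').i :=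
    fun β β' h h' => ((IH β' h').2.2.2.2.2.2.1 β h).1
  have hjmono : ∀ β β', β < β' → β' < α → (F β).j < (F β').j :=
    fun β β' h h' => ((IH β' h').2.2.2.2.2.2.1 β h).2.1
  have hilt : ∀ β, β < α → (F β).i < i₁ := fun β h =>
    lt_of_lt_of_le (himono β (β + 1) (hlt_add_one β) (hsucclt β h))
      (Ordinal.le_bsup _ _ (hsucclt β h))
  have hjlt : ∀ β, β < α → (F β).j < j₁ := fun β h =>
    lt_of_lt_of_le (hjmono β (β + 1) (hlt_add_one β) (hsucclt β h))
      (Ordinal.le_bsup _ _ (hsucclt β h))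
  have hipos : 0 < i₁ := lt_of_lt_of_le (IH 0 hα.pos).2.2.1 (Ordinal.le_bsup _ 0 hα.pos)
  have hjpos : 0 < j₁ := lt_of_lt_of_le (IH 0 hα.pos).2.2.2.1 (Ordinal.le_bsup _ 0 hα.pos)
  have hilim : Order.IsSuccLimit i₁ := by
    refine Ordinal.isSuccLimit_iff.2 ⟨ne_of_gt hipos, Order.isSuccPrelimit_of_succ_lt fun ξ hξ => ?_⟩
    obtain ⟨β, hβ, hξβ⟩ := (Ordinal.lt_bsup _).mp hξ
    exact lt_of_le_of_lt (Order.succ_le_of_lt hξβ) (hilt β hβ)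
  have hjlim : Order.IsSuccLimit j₁ := by
    refine Ordinal.isSuccLimit_iff.2 ⟨ne_of_gt hjpos, Order.isSuccPrelimit_of_succ_lt fun ξ hξ => ?_⟩
    obtain ⟨β, hβ, hξβ⟩ := (Ordinal.lt_bsup _).mp hξ
    exact lt_of_le_of_lt (Order.succ_le_of_lt hξβ) (hjlt β hβ)
  have hbcont := S.hbchain.2.2 i₁ hi₁δ hilim
  have hccont := S.hcchain.2.2 j₁ hj₁γ hjlim
  have hcover : (S.b i₁).carrier ⊆ ⋃ β ∈ Set.Iio α, (S.b (F β).i).carrier := by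
    intro u hu
    rw [hbcont] at hu
    simp only [Set.mem_iUnion, Set.mem_Iio] at hu ⊢
    obtain ⟨ξ, hξ, hmem⟩ := hu
    obtain ⟨β, hβ, hξβ⟩ := (Ordinal.lt_bsup _).mp hξ
    exact ⟨β, hβ, chain_subset_le _ S.hbchain (le_of_lt hξβ) (IH β hβ).1 hmem⟩
  have hXmono : ∀ β β', β ≤ β' → β' < α →
      (S.b (F β).i).carrier ⊆ (S.b (F β').i).carrier := by
    intro β β' hββ' hβ'
    rcases hββ'.lt_or_eq with h | rfl
    · exact chain_subset_le _ S.hbchain (le_of_lt (himono β β' h hβ')) (IH β' hβ').1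
    · exact subset_rfl
  have hXP : ∀ β, β < α → (S.b (F β).i).Sub (S.b i₁) := fun β hβ =>
    S.W.toAbstractClass.sub_of_strong
      (chain_strong_le _ S.hbchain (le_of_lt (hilt β hβ)) hi₁δ)
  have hYQ : ∀ β, β < α → (S.c (F β).j).Sub (S.c j₁) := fun β hβ =>
    S.W.toAbstractClass.sub_of_strong
      (chain_strong_le _ S.hcchain (le_of_lt (hjlt β hβ)) hj₁γ)
  obtain ⟨f, hfval⟩ := union_emb α hα.pos (fun β => S.b (F β).i) (fun β => S.c (F β).j)
    (S.b i₁) (S.c j₁) hXmono hXP hYQ hcover (fun β hβ => (F β).f)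
    (by
      intro β β' hββ' hβ' x hx
      rcases hββ'.lt_or_eq with h | rfl
      · exact (IH β' hβ').2.2.2.2.2.2.2.1 β h x hx
      · rfl)
  -- `f` is surjective onto `(S.c j₁).carrier`
  have hsurj : Function.Surjective f := by
    intro y
    obtain ⟨yv, hyv⟩ := y
    have h2 : yv ∈ ⋃ ξ ∈ Set.Iio j₁, (S.c ξ).carrier := hccont ▸ hyv
    simp only [Set.mem_iUnion, Set.mem_Iio] at h2
    obtain ⟨ξ, hξ, hmem⟩ := h2
    obtain ⟨β, hβ, hξβ⟩ := (Ordinal.lt_bsup _).mp hξ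
    have hyβ : yv ∈ (S.c (F β).j).carrier :=
      chain_subset_le _ S.hcchain (le_of_lt hξβ) (IH β hβ).2.1 hmem
    have hrange := (IH (β + 1) (hsucclt β hβ)).2.2.2.2.2.2.2.2 β (hlt_add_one β) hyβ
    obtain ⟨z, ⟨x0, rfl⟩, hzy⟩ := hrange
    have hx0P : ((x0 : (S.b (F (β + 1)).i).carrier) : U) ∈ (S.b i₁).carrier :=
      (hXP (β + 1) (hsucclt β hβ)).1 x0.2
    refine ⟨⟨(x0 : U), hx0P⟩, ?_⟩
    apply Subtype.ext
    rw [hfval (β + 1) (hsucclt β hβ) ⟨(x0 : U), hx0P⟩ x0.2]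
    exact hzy
  obtain ⟨g, hg⟩ := equiv_of_surj f hsurj
  have hstrong : S.W.toAbstractClass.IsStrongEmb f :=
    ⟨S.c j₁, S.W.toAbstractClass.strong_refl (S.hcchain.1 j₁ hj₁γ), g,
      fun x => congrArg Subtype.val (hg x)⟩
  refine ⟨⟨i₁, j₁, f⟩, hi₁δ, hj₁γ, hipos, hjpos, hstrong, ?_, ?_, ?_, ?_⟩
  · -- fixes A
    intro x hx
    have hx0 : (x : U) ∈ (S.b (F 0).i).carrier := by
      apply chain_subset_le _ S.hbchain zero_le (IH 0 hα.pos).1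
      rw [S.hb0]; exact hx
    show (f x : U) = (x : U)
    rw [hfval 0 hα.pos x hx0]
    exact (IH 0 hα.pos).2.2.2.2.2.1 ⟨(x : U), hx0⟩ hx
  · -- monotonicity and cofinality clauses
    intro β hβ
    refine ⟨hilt β hβ, hjlt β hβ, ?_, ?_⟩
    · exact lt_of_lt_of_le
        (((IH (β + 1) (hsucclt β hβ)).2.2.2.2.2.2.1 β (hlt_add_one β)).2.2.1)
        (le_of_lt (hilt (β + 1) (hsucclt β hβ)))
    · exact lt_of_lt_of_le
        (((IH (β + 1) (hsucclt β hβ)).2.2.2.2.2.2.1 β (hlt_add_one β)).2.2.2)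
        (le_of_lt (hjlt (β + 1) (hsucclt β hβ)))
  · -- coherence
    intro β hβ x hx
    exact hfval β hβ x hx
  · -- range
    intro β hβ y hy
    have hyj₁ : y ∈ (S.c j₁).carrier := (hYQ β hβ).1 hy
    obtain ⟨x, hx⟩ := hsurj ⟨y, hyj₁⟩
    exact ⟨f x, ⟨x, rfl⟩, congrArg Subtype.val hx⟩

end LMP

namespace LMP

open FirstOrder Cardinal Set FirstOrder.Language.Structure

variable {L : FirstOrder.Language.{u, u}} {U : Type u}

open scoped Classical in
noncomputable def nextStage (S : Setup L U) (α : Ordinal.{u}) (F : Ordinal.{u} → Stage S) :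
    Stage S :=
  if h : ∃ st, Ext S α F st then h.choose else default

lemma nextStage_ext {S : Setup L U} {α : Ordinal.{u}} {F : Ordinal.{u} → Stage S}
    (h : ∃ st, Ext S α F st) : Ext S α F (nextStage S α F) := by
  unfold nextStage
  split
  · exact Exists.choose_spec _
  · exact absurd h ‹_›

noncomputable def G (S : Setup L U) : Ordinal.{u} → Stage S :=
  WellFounded.fix Ordinal.lt_wf
    (fun α IH => nextStage S α (fun β => if h : β < α then IH β h else default))

lemma G_eq (S : Setup L U) (α : Ordinal.{u}) :
    G S α = nextStage S α (fun β => if h : β < α then G S β else default) :=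
  WellFounded.fix_eq _ _ _

lemma good (S : Setup L U) (θo : Ordinal.{u})
    (hθδ : ∀ α, α < θo → α.card < S.δ.cof) (hθγ : ∀ α, α < θo → α.card < S.γ.cof) :
    ∀ α, α < θo → Ext S α (G S) (G S α) := by
  intro α
  induction α using Ordinal.induction with
  | h α IHa =>
  intro hαθ
  have hFd : ∀ β, β < α → (if h : β < α then G S β else default) = G S β :=
    fun β h => dif_pos h
  have hex : ∃ st, Ext S α (fun β => if h : β < α then G S β else default) st := by
    rcases Ordinal.zero_or_succ_or_isSuccLimit α with h0 | ⟨α₀, rfl⟩ | hlim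
    · subst h0
      exact exists_ext_zero S _
    · apply exists_ext_succ S α₀
      have h1 : Ext S α₀ (G S) (G S α₀) :=
        IHa α₀ (Order.lt_succ α₀) ((Order.lt_succ α₀).trans hαθ)
      have h2 := ext_congr (F' := fun β => if h : β < Order.succ α₀ then G S β else default)
        (fun β hβ => (hFd β (hβ.trans (Order.lt_succ α₀))).symm) h1
      rw [hFd α₀ (Order.lt_succ α₀)]
      exact h2
    · apply exists_ext_limit S α hlim (hθδ α hαθ) (hθγ α hαθ)
      intro β hβ
      have h1 := IHa β hβ (hβ.trans hαθ)
      have h2 := ext_congr (F' := fun β' => if h : β' < α then G S β' else default)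
        (fun β' hβ' => (hFd β' (hβ'.trans hβ)).symm) h1
      rw [hFd β hβ]
      exact h2
  have hnext := nextStage_ext hex
  rw [G_eq S α]
  exact ext_congr hFd hnext

end LMP

/-- uniqueness part of Proposition 3.8: in a strongly `κ⁺`-categorical weak
AEC, limit models over `A` along limit ordinals of the same cofinality are isomorphic over `A`. -/
theorem statement1 {L : FirstOrder.Language.{u, u}} {U : Type u}
    (W : WeakAEC L U) (κ : Cardinal.{u}) (hκ : W.LS + ℵ₀ ≤ κ)
    (hcat : W.toAbstractClass.StronglyCat κ)
    (A : SStr L U) (hA : A ∈ W.K) (hAcard : #A.carrier = κ)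
    (δ γ : Ordinal.{u}) (hδ : Order.IsSuccLimit δ) (hγ : Order.IsSuccLimit γ)
    (hδκ : δ < (Order.succ κ).ord) (hγκ : γ < (Order.succ κ).ord)
    (hcof : δ.cof = γ.cof)
    (B C : SStr L U)
    (hB : W.toAbstractClass.IsLimitModelOver κ δ B A)
    (hC : W.toAbstractClass.IsLimitModelOver κ γ C A) :
    ∃ f : B.carrier ≃[L] C.carrier,
      ∀ (x : B.carrier), (x : U) ∈ A.carrier → (f x : U) = (x : U) := by
  classical
  obtain ⟨b, hb0, hbchain, hbunion, hbuniv, hbcard⟩ := hB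
  obtain ⟨c, hc0, hcchain, hcunion, hcuniv, hccard⟩ := hC
  have hκinf : ℵ₀ ≤ κ := le_trans le_add_self hκ
  obtain ⟨Fm, hFK, hFcard, -⟩ := hcat.1
  have hU : Order.succ κ ≤ #U := hFcard ▸ Cardinal.mk_subtype_le _
  -- fundamental sequences
  obtain ⟨fs, hfs⟩ := Ordinal.exists_fundamental_sequence δ
  obtain ⟨ft, hft⟩ := Ordinal.exists_fundamental_sequence γ
  have hordγ : γ.cof.ord = δ.cof.ord := by rw [hcof]
  set s : Ordinal.{u} → Ordinal.{u} :=
    fun β => if h : β < δ.cof.ord then fs β h else 0 with hsdef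
  set t : Ordinal.{u} → Ordinal.{u} :=
    fun β => if h : β < γ.cof.ord then ft β h else 0 with htdef
  have hs : ∀ β, s β < δ := by
    intro β
    simp only [hsdef]
    split
    · rw [← hfs.2.2]; exact Ordinal.lt_blsub _ _ _
    · exact hδ.pos
  have ht : ∀ β, t β < γ := by
    intro β
    simp only [htdef]
    split
    · rw [← hft.2.2]; exact Ordinal.lt_blsub _ _ _
    · exact hγ.pos
  set S : LMP.Setup L U :=
    ⟨W, κ, A, δ, γ, b, c, s, t, hκinf, hU, hδ, hγ, hb0, hc0, hbchain, hcchain,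
      hbuniv, hcuniv, hbcard, hccard, hs, ht⟩ with hSdef
  have hδ.cof.ordlim : Order.IsSuccLimit δ.cof.ord := Cardinal.isSuccLimit_ord (Ordinal.aleph0_le_cof.2 hδ)
  have hθδ : ∀ α, α < δ.cof.ord → α.card < S.δ.cof := fun α h => Cardinal.lt_ord.mp h
  have hθγ : ∀ α, α < δ.cof.ord → α.card < S.γ.cof := fun α h => by
    show α.card < γ.cof
    rw [← hcof]
    exact Cardinal.lt_ord.mp h
  have good := LMP.good S δ.cof.ord hθδ hθγ
  have hlt_add_one : ∀ x : Ordinal.{u}, x < x + 1 := fun x => by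
    rw [Ordinal.add_one_eq_succ]; exact Order.lt_succ x
  have hsucclt : ∀ β, β < δ.cof.ord → β + 1 < δ.cof.ord := fun β h => by
    rw [Ordinal.add_one_eq_succ]; exact hδ.cof.ordlim.succ_lt h
  set Gb : Ordinal.{u} → Ordinal.{u} := fun β => (LMP.G S β).i with hGbdef
  set Gc : Ordinal.{u} → Ordinal.{u} := fun β => (LMP.G S β).j with hGcdef
  -- monotonicity
  have himono : ∀ β β', β < β' → β' < δ.cof.ord → Gb β < Gb β' :=
    fun β β' h h' => ((good β' h').2.2.2.2.2.2.1 β h).1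
  have hXmono : ∀ β β', β ≤ β' → β' < δ.cof.ord →
      (b (Gb β)).carrier ⊆ (b (Gb β')).carrier := by
    intro β β' hββ' hβ'
    rcases hββ'.lt_or_eq with h | rfl
    · exact LMP.chain_subset_le _ hbchain (le_of_lt (himono β β' h hβ')) (good β' hβ').1
    · exact subset_rfl
  have hXP : ∀ β, β < δ.cof.ord → (b (Gb β)).Sub B := fun β hβ => hbunion.2 _ (good β hβ).1
  have hYQ : ∀ β, β < δ.cof.ord → (c (Gc β)).Sub C := fun β hβ => hcunion.2 _ (good β hβ).2.1
  -- the carriers of the chosen subchain cover B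
  have hcover : B.carrier ⊆ ⋃ β ∈ Set.Iio δ.cof.ord, (b (Gb β)).carrier := by
    intro u hu
    rw [hbunion.1] at hu
    simp only [Set.mem_iUnion, Set.mem_Iio] at hu ⊢
    obtain ⟨ξ, hξ, hmem⟩ := hu
    have hξ' : ξ < Ordinal.blsub δ.cof.ord fs := by rw [hfs.2.2]; exact hξ
    obtain ⟨β, hβ, hξβ⟩ := Ordinal.lt_blsub_iff.mp hξ'
    have hsβ : s β = fs β hβ := dif_pos hβ
    have hsβlt : s β < Gb (β + 1) :=
      ((good (β + 1) (hsucclt β hβ)).2.2.2.2.2.2.1 β (hlt_add_one β)).2.2.1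
    have hξlt : ξ < Gb (β + 1) := lt_of_le_of_lt (hsβ ▸ hξβ) hsβlt
    refine ⟨β + 1, hsucclt β hβ, ?_⟩
    exact LMP.chain_subset_le _ hbchain (le_of_lt hξlt) (good (β + 1) (hsucclt β hβ)).1 hmem
  -- the union embedding
  obtain ⟨femb, hfval⟩ := LMP.union_emb δ.cof.ord hδ.cof.ordlim.pos (fun β => b (Gb β)) (fun β => c (Gc β))
    B C hXmono hXP hYQ hcover (fun β hβ => (LMP.G S β).f)
    (by
      intro β β' hββ' hβ' x hx
      rcases hββ'.lt_or_eq with h | rfl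
      · exact (good β' hβ').2.2.2.2.2.2.2.1 β h x hx
      · rfl)
  -- surjectivity
  have hsurj : Function.Surjective femb := by
    intro y
    obtain ⟨yv, hyv⟩ := y
    have h2 : yv ∈ ⋃ ξ ∈ Set.Iio γ, (c ξ).carrier := hcunion.1 ▸ hyv
    simp only [Set.mem_iUnion, Set.mem_Iio] at h2
    obtain ⟨ξ, hξ, hmem⟩ := h2
    have hξ' : ξ < Ordinal.blsub γ.cof.ord ft := by rw [hft.2.2]; exact hξ
    obtain ⟨β, hβ, hξβ⟩ := Ordinal.lt_blsub_iff.mp hξ'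
    have hβθ : β < δ.cof.ord := hordγ ▸ hβ
    have htβ : t β = ft β hβ := dif_pos hβ
    have htβlt : t β < Gc (β + 1) :=
      ((good (β + 1) (hsucclt β hβθ)).2.2.2.2.2.2.1 β (hlt_add_one β)).2.2.2
    have hξlt : ξ < Gc (β + 1) := lt_of_le_of_lt (htβ ▸ hξβ) htβlt
    have hyβ : yv ∈ (c (Gc (β + 1))).carrier :=
      LMP.chain_subset_le _ hcchain (le_of_lt hξlt) (good (β + 1) (hsucclt β hβθ)).2.1 hmem
    have hβ2θ : β + 1 + 1 < δ.cof.ord := hsucclt _ (hsucclt β hβθ)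
    have hrange := (good (β + 1 + 1) hβ2θ).2.2.2.2.2.2.2.2 (β + 1) (hlt_add_one (β + 1)) hyβ
    obtain ⟨z, ⟨x0, rfl⟩, hzy⟩ := hrange
    have hx0P : ((x0 : (b (Gb (β + 1 + 1))).carrier) : U) ∈ B.carrier :=
      (hXP (β + 1 + 1) hβ2θ).1 x0.2
    refine ⟨⟨(x0 : U), hx0P⟩, ?_⟩
    apply Subtype.ext
    rw [hfval (β + 1 + 1) hβ2θ ⟨(x0 : U), hx0P⟩ x0.2]
    exact hzy
  obtain ⟨g, hg⟩ := LMP.equiv_of_surj femb hsurj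
  refine ⟨g, ?_⟩
  intro x hx
  have hx0 : (x : U) ∈ (b (Gb 0)).carrier := by
    apply LMP.chain_subset_le _ hbchain zero_le (good 0 hδ.cof.ordlim.pos).1
    rw [hb0]; exact hx
  have h1 : (g x : U) = (femb x : U) := congrArg Subtype.val (hg x)
  rw [h1, hfval 0 hδ.cof.ordlim.pos x hx0]
  exact (good 0 hδ.cof.ordlim.pos).2.2.2.2.2.1 ⟨(x : U), hx0⟩ hx
end

section
/- Let (K, ≼) be a weak AEC that is strongly κ⁺-categorical for some cardinal κ ≥ LS(K, ≼) + ℵ₀, let γ < κ⁺ be a limit ordinal, and let (D_i)_{i ≤ α} be a continuous ≼-chain of members of K of cardinality κ such that D_{i+1} is a (κ, γ)-(K, ≼)-limit model over D_i for every i < α. If α is a successor ordinal or cf(α) = γ, then D_α is a (κ, γ)-(K, ≼)-limit model over D₀. (Corollary 3.9.) -/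
open FirstOrder Cardinal Set

universe u

section Auxiliary

open FirstOrder Cardinal Set FirstOrder.Language.Structure

variable {L : FirstOrder.Language.{u, u}} {U : Type u}

private lemma ord_lt_add_one {i j : Ordinal.{u}} : i < j + 1 ↔ i ≤ j := by
  rw [Ordinal.add_one_eq_succ, Order.lt_succ_iff]

private lemma ord_lt_self_add_one (i : Ordinal.{u}) : i < i + 1 :=
  ord_lt_add_one.2 le_rfl

private lemma ord_add_one_le {i j : Ordinal.{u}} (h : i < j) : i + 1 ≤ j := by
  rw [Ordinal.add_one_eq_succ]; exact Order.succ_le_iff.2 h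

private lemma ord_one_lt {o : Ordinal.{u}} (h : Order.IsSuccLimit o) : 1 < o := by
  have := h.succ_lt h.pos
  rwa [Ordinal.succ_zero] at this

private lemma ord_add_one_ne_zero (i : Ordinal.{u}) : i + 1 ≠ 0 :=
  ((lt_of_le_of_lt (zero_le : (0 : Ordinal.{u}) ≤ i) (ord_lt_self_add_one i))).ne'

private lemma structure_eq {M : Type u} (S T : L.Structure M)
    (hfun : ∀ (n : ℕ) (F : L.Functions n) (x : Fin n → M),
      @FirstOrder.Language.Structure.funMap L M S n F x =
        @FirstOrder.Language.Structure.funMap L M T n F x)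
    (hrel : ∀ (n : ℕ) (r : L.Relations n) (x : Fin n → M),
      @FirstOrder.Language.Structure.RelMap L M S n r x ↔
        @FirstOrder.Language.Structure.RelMap L M T n r x) :
    S = T := by
  rcases S with ⟨f, r⟩
  rcases T with ⟨f', r'⟩
  congr 1
  · funext n F x
    exact hfun n F x
  · funext n rr x
    exact propext (hrel n rr x)

private lemma SStr.ext' {A B : SStr L U} (hcar : A.carrier = B.carrier)
    (hfun : ∀ (n : ℕ) (F : L.Functions n) (x : Fin n → A.carrier) (y : Fin n → B.carrier),
      (∀ k, (x k : U) = (y k : U)) →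
      ((funMap F x : A.carrier) : U) = ((funMap F y : B.carrier) : U))
    (hrel : ∀ (n : ℕ) (r : L.Relations n) (x : Fin n → A.carrier) (y : Fin n → B.carrier),
      (∀ k, (x k : U) = (y k : U)) → (RelMap r x ↔ RelMap r y)) :
    A = B := by
  obtain ⟨carA, strA⟩ := A
  obtain ⟨carB, strB⟩ := B
  change carA = carB at hcar
  subst hcar
  have : strA = strB := by
    apply structure_eq
    · intro n F x
      exact Subtype.ext (hfun n F x x fun _ => rfl)
    · intro n r x
      exact hrel n r x x fun _ => rfl
  rw [this]

namespace AbstractClass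

lemma carrier_mono' (AC : AbstractClass L U) {δ : Ordinal.{u}} {c : Ordinal.{u} → SStr L U}
    (hch : AC.IsCtsChain δ c)
    {i j : Ordinal.{u}} (hij : i ≤ j) (hj : j < δ) : (c i).carrier ⊆ (c j).carrier := by
  rcases eq_or_lt_of_le hij with rfl | h
  · exact subset_rfl
  · exact (AC.sub_of_strong (hch.2.1 i j h hj)).1

lemma isUnionOf_unique (AC : AbstractClass L U) {δ : Ordinal.{u}} (hδ : (0 : Ordinal.{u}) < δ)
    {c : Ordinal.{u} → SStr L U} (hch : AC.IsCtsChain δ c) {B B' : SStr L U}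
    (h1 : IsUnionOf δ c B) (h2 : IsUnionOf δ c B') : B = B' := by
  classical
  obtain ⟨hBc, hBsub⟩ := h1
  obtain ⟨hB'c, hB'sub⟩ := h2
  have hcar : B.carrier = B'.carrier := hBc.trans hB'c.symm
  have hbot : (⊥ : Ordinal.{u}) < δ := hδ
  have cover : ∀ (n : ℕ) (x : Fin n → B.carrier),
      ∃ j, j < δ ∧ ∀ k, (x k : U) ∈ (c j).carrier := by
    intro n x
    have hx : ∀ k, ∃ j, j < δ ∧ (x k : U) ∈ (c j).carrier := by
      intro k
      have hmem : (x k : U) ∈ ⋃ j ∈ Set.Iio δ, (c j).carrier := hBc.le (x k).2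
      simpa using hmem
    choose jf hjlt hjmem using hx
    have hsup : Finset.univ.sup jf < δ := (Finset.sup_lt_iff hbot).2 fun k _ => hjlt k
    exact ⟨Finset.univ.sup jf, hsup, fun k =>
      AC.carrier_mono' hch (Finset.le_sup (Finset.mem_univ k)) hsup (hjmem k)⟩
  apply SStr.ext' hcar
  · intro n F x y hxy
    obtain ⟨j, hj, hmem⟩ := cover n x
    obtain ⟨hsub1, e, he⟩ := hBsub j hj
    obtain ⟨hsub2, e', he'⟩ := hB'sub j hj
    set z : Fin n → (c j).carrier := fun k => ⟨x k, hmem k⟩ with hz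
    have hez : e ∘ z = x := funext fun k => Subtype.ext (he (z k))
    have hez' : e' ∘ z = y := funext fun k => Subtype.ext ((he' (z k)).trans (hxy k))
    have h1 : funMap F x = e (funMap F z) := by rw [e.map_fun F z, hez]
    have h2 : funMap F y = e' (funMap F z) := by rw [e'.map_fun F z, hez']
    rw [h1, h2, he, he']
  · intro n r x y hxy
    obtain ⟨j, hj, hmem⟩ := cover n x
    obtain ⟨hsub1, e, he⟩ := hBsub j hj
    obtain ⟨hsub2, e', he'⟩ := hB'sub j hj
    set z : Fin n → (c j).carrier := fun k => ⟨x k, hmem k⟩ with hz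
    have hez : e ∘ z = x := funext fun k => Subtype.ext (he (z k))
    have hez' : e' ∘ z = y := funext fun k => Subtype.ext ((he' (z k)).trans (hxy k))
    have h1 : RelMap r x ↔ RelMap r z := by rw [← hez]; exact e.map_rel r z
    have h2 : RelMap r y ↔ RelMap r z := by rw [← hez']; exact e'.map_rel r z
    rw [h1, h2]

lemma univOver_mono (AC : AbstractClass L U) {N B A : SStr L U}
    (hU : AC.UnivOver N A) (hs : AC.strong N B) : AC.UnivOver B A := by
  intro C hC hAC hcd
  obtain ⟨f, ⟨E, hE, g, hg⟩, hfix⟩ := hU C hC hAC hcd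
  obtain ⟨hsub, ι, hι⟩ := AC.sub_of_strong hs
  refine ⟨ι.comp f, ⟨E, AC.strong_trans hE hs, g, ?_⟩, ?_⟩
  · intro x
    rw [hg x, FirstOrder.Language.Embedding.comp_apply, hι (f x)]
  · intro x hx
    rw [FirstOrder.Language.Embedding.comp_apply, hι (f x), hfix x hx]

end AbstractClass

lemma WeakAEC.univOver_of_limitModel (W : WeakAEC L U) {κ : Cardinal.{u}} {γ : Ordinal.{u}}
    (hγ : Order.IsSuccLimit γ) {B A : SStr L U}
    (h : W.toAbstractClass.IsLimitModelOver κ γ B A) : W.toAbstractClass.UnivOver B A := by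
  obtain ⟨c, hc0, hch, hun, huniv, _⟩ := h
  obtain ⟨B', hun', _, hstr⟩ := W.chain_union γ hγ c hch
  have hBB : B = B' := W.toAbstractClass.isUnionOf_unique hγ.pos hch hun hun'
  have h1 : W.toAbstractClass.UnivOver (c (0 + 1)) (c 0) := huniv 0 hγ.pos
  rw [zero_add, hc0] at h1
  have h2 := W.toAbstractClass.univOver_mono h1 (hstr 1 (ord_one_lt hγ))
  rwa [← hBB] at h2

end Auxiliary

/-- Corollary 3.9: if `(D i)_{i ≤ α}` is a continuous strong chain of members
of `K` of cardinality `κ` in which each `D (i+1)` is a `(κ, γ)`-limit model over `D i`, and `α`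
is a successor ordinal or has cofinality `γ`, then `D α` is a `(κ, γ)`-limit model over `D 0`. -/
theorem statement2 {L : FirstOrder.Language.{u, u}} {U : Type u}
    (W : WeakAEC L U) (κ : Cardinal.{u}) (hκ : W.LS + ℵ₀ ≤ κ)
    (hcat : W.toAbstractClass.StronglyCat κ)
    (γ : Ordinal.{u}) (hγ : Order.IsSuccLimit γ) (hγκ : γ < (Order.succ κ).ord)
    (α : Ordinal.{u}) (D : Ordinal.{u} → SStr L U)
    (hchain : W.toAbstractClass.IsCtsChain (α + 1) D)
    (hcard : ∀ i, i ≤ α → #(D i).carrier = κ)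
    (hlim : ∀ i, i < α → W.toAbstractClass.IsLimitModelOver κ γ (D (i + 1)) (D i))
    (hα : (∃ β, α = β + 1) ∨ α.cof.ord = γ) :
    W.toAbstractClass.IsLimitModelOver κ γ (D α) (D 0) := by
  classical
  have hαK : ∀ i, i ≤ α → D i ∈ W.K := fun i hi => hchain.1 i (ord_lt_add_one.2 hi)
  have hstrong : ∀ i j, i ≤ j → j ≤ α → W.strong (D i) (D j) := by
    intro i j hij hj
    rcases eq_or_lt_of_le hij with rfl | h
    · exact W.strong_refl (hαK i hj)
    · exact hchain.2.1 i j h (ord_lt_add_one.2 hj)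
  have hsubc : ∀ i j, i ≤ j → j ≤ α → (D i).carrier ⊆ (D j).carrier :=
    fun i j h1 h2 => (W.sub_of_strong (hstrong i j h1 h2)).1
  have hAstep : ∀ i, i < α → W.toAbstractClass.UnivOver (D (i + 1)) (D i) :=
    fun i hi => W.univOver_of_limitModel hγ (hlim i hi)
  rcases hα with ⟨β, rfl⟩ | hcof
  · -- successor case
    by_cases hb : β = 0
    · subst hb
      exact hlim 0 (ord_lt_add_one.2 le_rfl)
    · have hb0 : (0 : Ordinal.{u}) < β := pos_iff_ne_zero.2 hb
      obtain ⟨c, hc0, hchc, hunc, hunivc, hcardc⟩ := hlim β (ord_lt_self_add_one β)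
      have h01 : W.toAbstractClass.UnivOver (D (0 + 1)) (D 0) :=
        hAstep 0 (lt_of_lt_of_le hb0 (le_of_lt (ord_lt_self_add_one β)))
      have h1β : W.strong (D (0 + 1)) (c 0) := by
        rw [hc0]
        refine hstrong (0 + 1) β ?_ (le_of_lt (ord_lt_self_add_one β))
        rw [zero_add]
        exact Order.one_le_iff_pos.2 hb0
      have hc01 : W.strong (c 0) (c 1) := hchc.2.1 0 1 zero_lt_one (ord_one_lt hγ)
      have hU1 : W.toAbstractClass.UnivOver (c 1) (D 0) :=
        W.toAbstractClass.univOver_mono h01 (W.strong_trans h1β hc01)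
      have hD0c0 : W.strong (D 0) (c 0) := by
        rw [hc0]; exact hstrong 0 β (zero_le : (0 : Ordinal.{u}) ≤ β) (le_of_lt (ord_lt_self_add_one β))
      have hD0cj : ∀ j, j < γ → W.strong (D 0) (c j) := by
        intro j hj
        rcases eq_or_lt_of_le (zero_le : (0 : Ordinal.{u}) ≤ j) with rfl | h0j
        · exact hD0c0
        · exact W.strong_trans hD0c0 (hchc.2.1 0 j h0j hj)
      set e : Ordinal.{u} → SStr L U := fun i => if i = 0 then D 0 else c i with hedef
      have he0 : e 0 = D 0 := by simp [hedef]
      have heN : ∀ {i : Ordinal.{u}}, i ≠ 0 → e i = c i := by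
        intro i hi; simp [hedef, hi]
      have hswap : ∀ i : Ordinal.{u}, Order.IsSuccLimit i → i ≤ γ →
          ⋃ j ∈ Set.Iio i, (e j).carrier = ⋃ j ∈ Set.Iio i, (c j).carrier := by
        intro i hli hiγ
        apply subset_antisymm
        · refine Set.iUnion₂_subset fun j hj => ?_
          by_cases h0 : j = 0
          · subst h0
            rw [he0]
            exact subset_trans (W.sub_of_strong hD0c0).1 (Set.subset_biUnion_of_mem (u := fun j => (c j).carrier) hj)
          · rw [heN h0]
            exact Set.subset_biUnion_of_mem (u := fun j => (c j).carrier) hj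
        · refine Set.iUnion₂_subset fun j hj => ?_
          by_cases h0 : j = 0
          · subst h0
            have h1i : (1 : Ordinal.{u}) ∈ Set.Iio i := ord_one_lt hli
            refine subset_trans ?_ (Set.subset_biUnion_of_mem (u := fun j => (e j).carrier) h1i)
            show (c 0).carrier ⊆ (e 1).carrier
            rw [heN one_ne_zero]
            exact (W.sub_of_strong hc01).1
          · rw [← heN h0]
            exact Set.subset_biUnion_of_mem (u := fun j => (e j).carrier) hj
      refine ⟨e, he0, ⟨?_, ?_, ?_⟩, ⟨?_, ?_⟩, ?_, ?_⟩
      · intro i hi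
        by_cases h0 : i = 0
        · subst h0; rw [he0]; exact hαK 0 zero_le
        · rw [heN h0]; exact hchc.1 i hi
      · intro i j hij hj
        have hj0 : j ≠ 0 := (lt_of_le_of_lt (zero_le : (0 : Ordinal.{u}) ≤ i) hij).ne'
        rw [heN hj0]
        by_cases h0 : i = 0
        · subst h0; rw [he0]; exact hD0cj j hj
        · rw [heN h0]; exact hchc.2.1 i j hij hj
      · intro i hi hli
        rw [heN hli.pos.ne', hswap i hli (le_of_lt hi)]
        exact hchc.2.2 i hi hli
      · rw [hunc.1, hswap γ hγ le_rfl]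
      · intro i hi
        by_cases h0 : i = 0
        · subst h0; rw [he0]
          exact W.sub_of_strong (hstrong 0 (β + 1) zero_le le_rfl)
        · rw [heN h0]; exact hunc.2 i hi
      · intro i hi
        rw [heN (ord_add_one_ne_zero i)]
        by_cases h0 : i = 0
        · subst h0; rw [he0, zero_add]; exact hU1
        · rw [heN h0]; exact hunivc i hi
      · intro i hi
        by_cases h0 : i = 0
        · subst h0; rw [he0]; exact hcard 0 zero_le
        · rw [heN h0]; exact hcardc i hi
  · -- cofinality case
    rcases Ordinal.zero_or_succ_or_isSuccLimit α with h0 | ⟨β, hs⟩ | hαlim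
    · exfalso
      subst h0
      rw [Ordinal.cof_zero, Cardinal.ord_zero] at hcof
      exact hγ.pos.ne' hcof.symm
    · exfalso
      rw [← hs, Ordinal.cof_succ, Cardinal.ord_one] at hcof
      exact ((ord_one_lt hγ)).ne' hcof.symm
    · subst hcof
      obtain ⟨f, hf⟩ := Ordinal.exists_fundamental_sequence α
      set F : Ordinal.{u} → Ordinal.{u} := fun j => if h : j < α.cof.ord then f j h else 0 with hF
      set g : Ordinal.{u} → Ordinal.{u} := fun i => Ordinal.blsub i (fun j _ => F j) with hg
      have hg0 : g 0 = 0 := Ordinal.blsub_zero _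
      have hFmono : ∀ {i j : Ordinal.{u}}, i < α.cof.ord → j < α.cof.ord → i < j → F i < F j := by
        intro i j hi hj hij
        simp only [hF, dif_pos hi, dif_pos hj]
        exact hf.2.1 hi hj hij
      have hFlt : ∀ {i : Ordinal.{u}}, i < α.cof.ord → F i < α := by
        intro i hi
        have h1 := Ordinal.lt_blsub (fun j hj => f j hj) i hi
        rw [hf.2.2] at h1
        simpa only [hF, dif_pos hi] using h1
      have hgleF : ∀ {i : Ordinal.{u}}, i < α.cof.ord → g i ≤ F i := by
        intro i hi
        exact Ordinal.blsub_le fun j hj => hFmono (hj.trans hi) hi hj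
      have hglt : ∀ {i : Ordinal.{u}}, i < α.cof.ord → g i < α :=
        fun hi => lt_of_le_of_lt (hgleF hi) (hFlt hi)
      have hFg1 : ∀ i : Ordinal.{u}, F i < g (i + 1) :=
        fun i => Ordinal.lt_blsub (fun j _ => F j) i (ord_lt_self_add_one i)
      have hgmono : ∀ {i j : Ordinal.{u}}, i ≤ j → g i ≤ g j := by
        intro i j hij
        exact Ordinal.blsub_le fun k hk => Ordinal.lt_blsub _ k (lt_of_lt_of_le hk hij)
      have hgstrict : ∀ {i j : Ordinal.{u}}, i < j → j < α.cof.ord → g i < g j := by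
        intro i j hij hj
        have h1 : g i < g (i + 1) := lt_of_le_of_lt (hgleF (hij.trans hj)) (hFg1 i)
        exact lt_of_lt_of_le h1 (hgmono (ord_add_one_le hij))
      have hgcof : ∀ k, k < α → ∃ i, i < α.cof.ord ∧ k < g i := by
        intro k hk
        rw [← hf.2.2] at hk
        obtain ⟨j, hj, hkf⟩ := Ordinal.lt_blsub_iff.1 hk
        refine ⟨j + 1, by rw [Ordinal.add_one_eq_succ]; exact hγ.succ_lt hj, ?_⟩
        have : k ≤ F j := by simpa only [hF, dif_pos hj] using hkf
        exact lt_of_le_of_lt this (hFg1 j)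
      have hgcofin : ∀ {i : Ordinal.{u}}, i < α.cof.ord → Order.IsSuccLimit i →
          ∀ k, k < g i → ∃ j, j < i ∧ k < g j := by
        intro i hi hli k hk
        obtain ⟨j, hj, hkF⟩ := Ordinal.lt_blsub_iff.1 hk
        exact ⟨j + 1, by rw [Ordinal.add_one_eq_succ]; exact hli.succ_lt hj, lt_of_le_of_lt hkF (hFg1 j)⟩
      have hglim : ∀ {i : Ordinal.{u}}, i < α.cof.ord → Order.IsSuccLimit i → Order.IsSuccLimit (g i) := by
        intro i hi hli
        rw [Ordinal.isSuccLimit_iff, Order.isSuccPrelimit_iff_succ_lt]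
        constructor
        · have : g 0 < g i := hgstrict hli.pos hi
          rw [hg0] at this
          exact this.ne'
        · intro a ha
          obtain ⟨j, hj, haj⟩ := hgcofin hi hli a ha
          rw [← Ordinal.add_one_eq_succ]
          exact lt_of_le_of_lt (ord_add_one_le haj) (hgstrict hj hi)
      refine ⟨fun i => D (g i), by show D (g 0) = D 0; rw [hg0], ⟨?_, ?_, ?_⟩, ⟨?_, ?_⟩, ?_, ?_⟩
      · intro i hi
        exact hαK (g i) (le_of_lt (hglt hi))
      · intro i j hij hj
        exact hchain.2.1 _ _ (hgstrict hij hj) (ord_lt_add_one.2 (le_of_lt (hglt hj)))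
      · intro i hi hli
        show (D (g i)).carrier = ⋃ j ∈ Set.Iio i, (D (g j)).carrier
        have h1 := hchain.2.2 (g i) (ord_lt_add_one.2 (le_of_lt (hglt hi))) (hglim hi hli)
        rw [h1]
        ext u
        simp only [Set.mem_iUnion, Set.mem_Iio, exists_prop]
        constructor
        · rintro ⟨k, hk, hu⟩
          obtain ⟨j, hji, hkg⟩ := hgcofin hi hli k hk
          exact ⟨j, hji, hsubc k (g j) (le_of_lt hkg) (le_of_lt (hglt (hji.trans hi))) hu⟩
        · rintro ⟨j, hji, hu⟩
          exact ⟨g j, hgstrict hji hi, hu⟩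
      · show (D α).carrier = ⋃ j ∈ Set.Iio α.cof.ord, (D (g j)).carrier
        have h1 := hchain.2.2 α (ord_lt_self_add_one α) hαlim
        rw [h1]
        ext u
        simp only [Set.mem_iUnion, Set.mem_Iio, exists_prop]
        constructor
        · rintro ⟨k, hk, hu⟩
          obtain ⟨i, hiσ, hki⟩ := hgcof k hk
          exact ⟨i, hiσ, hsubc k (g i) (le_of_lt hki) (le_of_lt (hglt hiσ)) hu⟩
        · rintro ⟨i, hiσ, hu⟩
          exact ⟨g i, hglt hiσ, hu⟩
      · intro i hi
        exact W.sub_of_strong (hchain.2.1 (g i) α (hglt hi) (ord_lt_self_add_one α))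
      · intro i hi
        show W.toAbstractClass.UnivOver (D (g (i + 1))) (D (g i))
        have hA := hAstep (g i) (hglt hi)
        have hsuccσ : i + 1 < α.cof.ord := by rw [Ordinal.add_one_eq_succ]; exact hγ.succ_lt hi
        have hle : g i + 1 ≤ g (i + 1) := ord_add_one_le (hgstrict (ord_lt_self_add_one i) hsuccσ)
        rcases eq_or_lt_of_le hle with heq | hlt
        · rw [← heq]; exact hA
        · exact W.toAbstractClass.univOver_mono hA
            (hchain.2.1 _ _ hlt (ord_lt_add_one.2 (le_of_lt (hglt hsuccσ))))
      · intro i hi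
        exact hcard (g i) (le_of_lt (hglt hi))
end

section
/- Let (K, ≼) be a weak AEC that is strongly κ⁺-categorical for some cardinal κ ≥ LS(K, ≼) + ℵ₀. Then for every D ∈ K of cardinality κ and every limit ordinal γ < κ⁺ there is a continuous ≼-chain (A_i)_{i<κ⁺} of members of K whose union is isomorphic to F(κ⁺), such that A₀ ≅ D and for all α < β < κ⁺ with β a successor ordinal, A_β is a (κ, γ)-(K, ≼)-limit model over A_α. (Proposition 3.12: filtration of F(κ⁺) by limit models.) -/
open FirstOrder Cardinal Set

universe u

namespace Stmt3Aux

open FirstOrder Language Set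

variable {L : FirstOrder.Language.{u, u}} {U : Type u}

lemma str_eq_of_id_emb {M : Type u} {s t : L.Structure M}
    (f : @FirstOrder.Language.Embedding L M M s t) (hid : ∀ x, f x = x) : s = t := by
  have hfun : ∀ (n : ℕ) (F : L.Functions n) (v : Fin n → M),
      @Structure.funMap L M s n F v = @Structure.funMap L M t n F v := by
    intro n F v
    have h1' : f (@Structure.funMap L M s n F v)
        = @Structure.funMap L M t n F (fun i => f (v i)) :=
      @FirstOrder.Language.Embedding.map_fun' L M M s t f _ F v
    have h2 : (fun i => f (v i)) = v := funext fun i => hid (v i)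
    rw [h2] at h1'
    rw [← h1']
    exact (hid _).symm
  have hrel : ∀ (n : ℕ) (r : L.Relations n) (v : Fin n → M),
      @Structure.RelMap L M s n r v = @Structure.RelMap L M t n r v := by
    intro n r v
    have h1' : (@Structure.RelMap L M t n r (fun i => f (v i)) ↔ @Structure.RelMap L M s n r v) :=
      @FirstOrder.Language.Embedding.map_rel' L M M s t f _ r v
    have h2 : (fun i => f (v i)) = v := funext fun i => hid (v i)
    rw [h2] at h1'
    exact (propext h1').symm
  obtain ⟨fm, rm⟩ := s
  obtain ⟨fm', rm'⟩ := t
  congr 1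
  · funext n F v; exact hfun n F v
  · funext n r v; exact hrel n r v

/-- If `A` is a substructure of `B` and carriers coincide, then `A = B`. -/
lemma eq_of_sub_of_carrier_eq {A B : SStr L U} (h : A.Sub B) (hc : A.carrier = B.carrier) :
    A = B := by
  obtain ⟨cA, sA⟩ := A
  obtain ⟨cB, sB⟩ := B
  simp only at hc
  subst hc
  obtain ⟨-, f, hf⟩ := h
  have : sA = sB := str_eq_of_id_emb f (fun x => Subtype.ext (hf x))
  rw [this]

end Stmt3Aux
namespace Stmt3Aux

section
variable {L : FirstOrder.Language.{u, u}} {U : Type u} (W : WeakAEC L U)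

/-- Universality implies (strong) extension. -/
lemma strong_of_univOver {B X : SStr L U} (hu : W.toAbstractClass.UnivOver B X)
    (hX : X ∈ W.K) : X.Sub B ∧ W.strong X B := by
  obtain ⟨f, ⟨Dm, hDB, g, hg⟩, hfix⟩ := hu X hX (W.strong_refl hX) rfl
  have hfx : ∀ x : X.carrier, ((f x : B.carrier) : U) = (x : U) := fun x => hfix x x.2
  have hsub : X.Sub B := by
    refine ⟨fun x hx => ?_, f, hfx⟩
    have := (f ⟨x, hx⟩).2
    rwa [hfx ⟨x, hx⟩] at this
  refine ⟨hsub, ?_⟩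
  have hBK : B ∈ W.K := W.mem_of_strong_right hDB
  refine W.iso_strong hBK hDB (FirstOrder.Language.Equiv.refl L B.carrier) ?_ hsub
  refine ⟨g.symm, fun y hy => ?_⟩
  have h1 : (g (g.symm y) : U) = ((g.symm y : X.carrier) : U) := by
    rw [hg (g.symm y)]; exact hfx _
  have h2 : g (g.symm y) = y := g.apply_symm_apply y
  rw [h2] at h1
  simpa using h1.symm

/-- Universality is preserved by strong extension of the target. -/
lemma univOver_mono {B B' X : SStr L U} (hu : W.toAbstractClass.UnivOver B X)
    (hBB' : W.strong B B') : W.toAbstractClass.UnivOver B' X := by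
  intro C hC hXC hcard
  obtain ⟨f, ⟨Dm, hDB, g, hg⟩, hfix⟩ := hu C hC hXC hcard
  obtain ⟨-, incl, hincl⟩ := W.sub_of_strong hBB'
  refine ⟨incl.comp f, ⟨Dm, W.strong_trans hDB hBB', g, fun x => ?_⟩, fun x hx => ?_⟩
  · rw [hg x]
    simp only [FirstOrder.Language.Embedding.comp_apply]
    exact (hincl (f x)).symm
  · simp only [FirstOrder.Language.Embedding.comp_apply]
    rw [hincl (f x)]
    exact hfix x hx

lemma univOver_mono' {B B' X : SStr L U} (hu : W.toAbstractClass.UnivOver B X)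
    (hBB' : B = B' ∨ W.strong B B') : W.toAbstractClass.UnivOver B' X := by
  rcases hBB' with rfl | h
  · exact hu
  · exact univOver_mono W hu h

variable {κ : Cardinal.{u}}

/-- The key existence result for universal proper strong extensions. -/
lemma exists_uext (hcat : W.toAbstractClass.StronglyCat κ) {X : SStr L U}
    (hX : X ∈ W.K) (hXc : #X.carrier = κ) :
    ∃ B, B ∈ W.K ∧ #B.carrier = κ ∧ W.toAbstractClass.UnivOver B X ∧ W.strong X B ∧
      ∃ u, u ∈ B.carrier ∧ u ∉ X.carrier := by
  obtain ⟨B₀, hB₀K, hB₀c, hu⟩ := hcat.2.2 X hX hXc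
  obtain ⟨hsub, hstr⟩ := strong_of_univOver W hu hX
  obtain ⟨X', hX'K, hX'c, hne, hstrXX'⟩ := hcat.2.1 X hX hXc
  have hsubXX' : X.Sub X' := W.sub_of_strong hstrXX'
  have hcne : X.carrier ≠ X'.carrier := by
    intro hc
    exact hne (eq_of_sub_of_carrier_eq hsubXX' hc)
  obtain ⟨u0, hu0X', hu0X⟩ : ∃ u0, u0 ∈ X'.carrier ∧ u0 ∉ X.carrier := by
    by_contra hcon
    push_neg at hcon
    exact hcne (Set.Subset.antisymm hsubXX'.1 fun x hx => hcon x hx)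
  obtain ⟨f, hfse, hfix⟩ := hu X' hX'K hstrXX' (hX'c.trans hXc.symm)
  refine ⟨B₀, hB₀K, hB₀c, hu, hstr, (f ⟨u0, hu0X'⟩ : U), (f ⟨u0, hu0X'⟩).2, ?_⟩
  intro hmem
  have hy : ((f ⟨u0, hu0X'⟩ : B₀.carrier) : U) ∈ X'.carrier := hsubXX'.1 hmem
  have := hfix ⟨_, hy⟩ hmem
  have heq : f ⟨_, hy⟩ = f ⟨u0, hu0X'⟩ := Subtype.ext this
  have := f.injective heq
  have h3 := congrArg (fun z : X'.carrier => (z : U)) this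
  simp only at h3
  rw [h3] at hmem
  exact hu0X hmem

end
end Stmt3Aux
namespace Stmt3Aux

open scoped Classical

variable {L : FirstOrder.Language.{u, u}} {U : Type u}

/-- A choice of universal proper strong extension (if one exists). -/
noncomputable def uext (W : WeakAEC L U) (κ : Cardinal.{u}) (X : SStr L U) : SStr L U :=
  if h : ∃ B, B ∈ W.K ∧ #B.carrier = κ ∧ W.toAbstractClass.UnivOver B X ∧ W.strong X B ∧
      ∃ u, u ∈ B.carrier ∧ u ∉ X.carrier then h.choose else X

lemma uext_spec (W : WeakAEC L U) {κ : Cardinal.{u}} (hcat : W.toAbstractClass.StronglyCat κ)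
    {X : SStr L U} (hX : X ∈ W.K) (hXc : #X.carrier = κ) :
    uext W κ X ∈ W.K ∧ #(uext W κ X).carrier = κ ∧
      W.toAbstractClass.UnivOver (uext W κ X) X ∧ W.strong X (uext W κ X) ∧
      ∃ u, u ∈ (uext W κ X).carrier ∧ u ∉ X.carrier := by
  have h := exists_uext W hcat hX hXc
  rw [uext, dif_pos h]
  exact h.choose_spec

/-- A choice of union of a chain (if one exists). -/
noncomputable def uLim (W : WeakAEC L U) (D : SStr L U) (i : Ordinal.{u})
    (A : Ordinal.{u} → SStr L U) : SStr L U :=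
  if h : ∃ B, IsUnionOf i A B ∧ B ∈ W.K ∧ ∀ j, j < i → W.strong (A j) B then h.choose else D

lemma uLim_spec (W : WeakAEC L U) (D : SStr L U) {i : Ordinal.{u}} (hi : Order.IsSuccLimit i)
    {A : Ordinal.{u} → SStr L U} (hA : W.toAbstractClass.IsCtsChain i A) :
    IsUnionOf i A (uLim W D i A) ∧ uLim W D i A ∈ W.K ∧
      ∀ j, j < i → W.strong (A j) (uLim W D i A) := by
  have h := W.chain_union i hi A hA
  rw [uLim, dif_pos h]
  exact h.choose_spec

/-- The master chain construction by transfinite recursion. -/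
noncomputable def chainStep (W : WeakAEC L U) (κ : Cardinal.{u}) (D : SStr L U)
    (i : Ordinal.{u}) (prev : ∀ j, j < i → SStr L U) : SStr L U :=
  if h : ∃ j, i = j + 1 then
    uext W κ (prev h.choose (by
      have h2 : h.choose < h.choose + 1 := by
        rw [Ordinal.add_one_eq_succ]; exact Order.lt_succ _
      exact lt_of_lt_of_eq h2 h.choose_spec.symm))
  else if i = 0 then D
  else uLim W D i (fun j => if hj : j < i then prev j hj else D)

noncomputable def chain (W : WeakAEC L U) (κ : Cardinal.{u}) (D : SStr L U) :
    Ordinal.{u} → SStr L U :=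
  Ordinal.lt_wf.fix (chainStep W κ D)

lemma chain_eq (W : WeakAEC L U) (κ : Cardinal.{u}) (D : SStr L U) (i : Ordinal.{u}) :
    chain W κ D i = chainStep W κ D i (fun j _ => chain W κ D j) :=
  Ordinal.lt_wf.fix_eq _ i

lemma chain_zero (W : WeakAEC L U) (κ : Cardinal.{u}) (D : SStr L U) :
    chain W κ D 0 = D := by
  rw [chain_eq, chainStep]
  have h1 : ¬ ∃ j : Ordinal.{u}, (0 : Ordinal.{u}) = j + 1 := by
    rintro ⟨j, hj⟩
    rw [Ordinal.add_one_eq_succ] at hj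
    exact (Ordinal.succ_ne_zero j) hj.symm
  rw [dif_neg h1, if_pos rfl]

lemma chain_succ (W : WeakAEC L U) (κ : Cardinal.{u}) (D : SStr L U) (i : Ordinal.{u}) :
    chain W κ D (i + 1) = uext W κ (chain W κ D i) := by
  rw [chain_eq, chainStep]
  have h : ∃ j : Ordinal.{u}, i + 1 = j + 1 := ⟨i, rfl⟩
  rw [dif_pos h]
  congr 1
  have hs : Order.succ i = Order.succ h.choose := by
    rw [← Ordinal.add_one_eq_succ, ← Ordinal.add_one_eq_succ]
    exact h.choose_spec
  exact congrArg (chain W κ D) (Order.succ_eq_succ_iff.1 hs).symm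

lemma chain_limit (W : WeakAEC L U) (κ : Cardinal.{u}) (D : SStr L U) {i : Ordinal.{u}}
    (hi : Order.IsSuccLimit i) :
    chain W κ D i = uLim W D i (fun j => if j < i then chain W κ D j else D) := by
  rw [chain_eq, chainStep]
  have h1 : ¬ ∃ j : Ordinal.{u}, i = j + 1 := by
    rintro ⟨j, hj⟩
    rw [Ordinal.add_one_eq_succ] at hj
    exact Order.not_isSuccLimit_succ j (hj ▸ hi)
  rw [dif_neg h1, if_neg hi.pos.ne']
  simp only [dite_eq_ite]

end Stmt3Aux
namespace Stmt3Aux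

open Cardinal Set

variable {L : FirstOrder.Language.{u, u}} {U : Type u}

section Arith

variable {κ : Cardinal.{u}}

lemma card_le_of_lt_theta {i : Ordinal.{u}} (hi : i < (Order.succ κ).ord) : i.card ≤ κ :=
  Order.lt_succ_iff.1 (Cardinal.lt_ord.1 hi)

lemma theta_isLimit (hκ0 : ℵ₀ ≤ κ) : Order.IsSuccLimit (Order.succ κ).ord :=
  Cardinal.isSuccLimit_ord (hκ0.trans (Order.le_succ κ))

lemma mul_lt_theta (hκ0 : ℵ₀ ≤ κ) {a b : Ordinal.{u}} (ha : a < (Order.succ κ).ord)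
    (hb : b < (Order.succ κ).ord) : a * b < (Order.succ κ).ord := by
  rw [Cardinal.lt_ord, Ordinal.card_mul]
  refine lt_of_le_of_lt ?_ (Order.lt_succ κ)
  calc a.card * b.card ≤ κ * κ :=
        mul_le_mul' (card_le_of_lt_theta ha) (card_le_of_lt_theta hb)
    _ = κ := Cardinal.mul_eq_self hκ0

lemma add_lt_theta (hκ0 : ℵ₀ ≤ κ) {a b : Ordinal.{u}} (ha : a < (Order.succ κ).ord)
    (hb : b < (Order.succ κ).ord) : a + b < (Order.succ κ).ord := by
  rw [Cardinal.lt_ord, Ordinal.card_add]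
  refine lt_of_le_of_lt ?_ (Order.lt_succ κ)
  calc a.card + b.card ≤ κ + κ :=
        add_le_add (card_le_of_lt_theta ha) (card_le_of_lt_theta hb)
    _ = κ := Cardinal.add_eq_self hκ0

/-- Bounding the cardinality of a union over an initial segment of ordinals. -/
lemma mk_biUnion_Iio_le {o : Ordinal.{u}} {g : Ordinal.{u} → Set U} {μ : Cardinal.{u}}
    (hμ : ℵ₀ ≤ μ) (hoc : o.card ≤ μ) (h : ∀ j, j < o → #(g j) ≤ μ) :
    #(⋃ j ∈ Set.Iio o, g j) ≤ μ := by
  have heq : (⋃ j ∈ Set.Iio o, g j) = ⋃ x : o.ToType, g (((Ordinal.ToType.mk (o := o))).symm x) := by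
    ext u
    simp only [Set.mem_iUnion, Set.mem_Iio, exists_prop]
    constructor
    · rintro ⟨j, hj, hu⟩
      refine ⟨(Ordinal.ToType.mk (o := o)) ⟨j, hj⟩, ?_⟩
      rw [OrderIso.symm_apply_apply]
      exact hu
    · rintro ⟨x, hu⟩
      exact ⟨(((Ordinal.ToType.mk (o := o))).symm x : Set.Iio o), (((Ordinal.ToType.mk (o := o))).symm x).2, hu⟩
  rw [heq]
  refine le_trans (Cardinal.mk_iUnion_le _) ?_
  have h1 : #o.ToType = o.card := Cardinal.mk_toType o
  have h2 : ⨆ x : o.ToType, #(g (((Ordinal.ToType.mk (o := o))).symm x)) ≤ μ :=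
    ciSup_le' fun x => h _ (Set.mem_Iio.1 (((Ordinal.ToType.mk (o := o))).symm x).2)
  calc #o.ToType * ⨆ x : o.ToType, #(g (((Ordinal.ToType.mk (o := o))).symm x))
      ≤ μ * μ := mul_le_mul' (h1.le.trans (h1 ▸ hoc)) h2
    _ = μ := Cardinal.mul_eq_self hμ

end Arith

section Master

variable (W : WeakAEC L U) (κ : Cardinal.{u}) (D : SStr L U)

/-- The master invariant along the chain. -/
lemma master (hκ0 : ℵ₀ ≤ κ) (hcat : W.toAbstractClass.StronglyCat κ)
    (hD : D ∈ W.K) (hDc : #D.carrier = κ) :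
    ∀ i, i < (Order.succ κ).ord →
      (chain W κ D i ∈ W.K ∧ #(chain W κ D i).carrier = κ) ∧
      (∀ j, j < i → W.strong (chain W κ D j) (chain W κ D i)) ∧
      (Order.IsSuccLimit i → (chain W κ D i).carrier = ⋃ j ∈ Set.Iio i, (chain W κ D j).carrier) := by
  intro i
  induction i using Ordinal.induction with
  | h i IH =>
  intro hiθ
  rcases Ordinal.zero_or_succ_or_isSuccLimit i with rfl | ⟨j, rfl⟩ | hlim
  · rw [chain_zero]
    exact ⟨⟨hD, hDc⟩, fun j hj => (lt_irrefl _ (lt_of_lt_of_le hj (zero_le (a := j)))).elim, fun h => (lt_irrefl _ h.pos).elim⟩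
  · -- successor case
    rw [← Ordinal.add_one_eq_succ] at hiθ ⊢
    have hjj : j < j + 1 := by rw [Ordinal.add_one_eq_succ]; exact Order.lt_succ j
    have hjθ : j < (Order.succ κ).ord := lt_trans hjj hiθ
    have IHj := IH j (Order.lt_succ j) hjθ
    have hc := chain_succ W κ D j
    have spec := uext_spec W hcat IHj.1.1 IHj.1.2
    rw [← hc] at spec
    refine ⟨⟨spec.1, spec.2.1⟩, ?_, ?_⟩
    · intro k hk
      have hk' : k ≤ j := by rw [Ordinal.add_one_eq_succ] at hk; exact Order.lt_succ_iff.1 hk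
      rcases lt_or_eq_of_le hk' with hk2 | rfl
      · exact W.strong_trans (IHj.2.1 k hk2) spec.2.2.2.1
      · exact spec.2.2.2.1
    · intro h
      rw [Ordinal.add_one_eq_succ] at h
      exact (Order.not_isSuccLimit_succ j h).elim
  · -- limit case
    have hch : W.toAbstractClass.IsCtsChain i (fun j => if j < i then chain W κ D j else D) := by
      refine ⟨fun j hj => ?_, fun j k hjk hk => ?_, fun j hj hjl => ?_⟩
      · dsimp only; rw [if_pos hj]; exact (IH j hj (hj.trans hiθ)).1.1
      · dsimp only; rw [if_pos (hjk.trans hk), if_pos hk]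
        exact (IH k hk (hk.trans hiθ)).2.1 j hjk
      · dsimp only; rw [if_pos hj, (IH j hj (hj.trans hiθ)).2.2 hjl]
        refine Set.iUnion₂_congr fun k hk => ?_
        rw [if_pos (lt_trans (Set.mem_Iio.1 hk) hj)]
    have spec := uLim_spec W D hlim hch
    have hceq := chain_limit W κ D hlim
    rw [← hceq] at spec
    have hcar : (chain W κ D i).carrier = ⋃ j ∈ Set.Iio i, (chain W κ D j).carrier := by
      rw [spec.1.1]
      refine Set.iUnion₂_congr fun k hk => ?_
      dsimp only; rw [if_pos (Set.mem_Iio.1 hk)]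
    have hstrong : ∀ j, j < i → W.strong (chain W κ D j) (chain W κ D i) := by
      intro j hj
      have := spec.2.2 j hj
      rwa [if_pos hj] at this
    refine ⟨⟨spec.2.1, ?_⟩, hstrong, fun _ => hcar⟩
    -- cardinality
    refine le_antisymm ?_ ?_
    · rw [hcar]
      exact mk_biUnion_Iio_le hκ0 (card_le_of_lt_theta hiθ)
        (fun j hj => ((IH j hj (hj.trans hiθ)).1.2).le)
    · have h0 : W.strong (chain W κ D 0) (chain W κ D i) := hstrong 0 hlim.pos
      have hsub := (W.sub_of_strong h0).1
      rw [chain_zero] at hsub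
      calc κ = #D.carrier := hDc.symm
        _ ≤ #(chain W κ D i).carrier := Cardinal.mk_le_mk_of_subset hsub

end Master
end Stmt3Aux
open Stmt3Aux in
/-- Proposition 3.12: in a strongly `κ⁺`-categorical weak AEC, for every
`D ∈ K` of cardinality `κ` and every limit `γ < κ⁺`, the unique model `F` of cardinality `κ⁺`
has a filtration `(A i)_{i < κ⁺}` with `A 0 ≅ D` and with `A β` a `(κ, γ)`-limit model over
`A α` whenever `α < β < κ⁺` and `β` is a successor ordinal. -/
theorem statement3 {L : FirstOrder.Language.{u, u}} {U : Type u}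
    (W : WeakAEC L U) (κ : Cardinal.{u}) (hκ : W.LS + ℵ₀ ≤ κ)
    (hcat : W.toAbstractClass.StronglyCat κ)
    (D : SStr L U) (hD : D ∈ W.K) (hDcard : #D.carrier = κ)
    (γ : Ordinal.{u}) (hγ : Order.IsSuccLimit γ) (hγκ : γ < (Order.succ κ).ord)
    (F : SStr L U) (hF : F ∈ W.K) (hFcard : #F.carrier = Order.succ κ) :
    ∃ A : Ordinal.{u} → SStr L U,
      W.toAbstractClass.IsCtsChain (Order.succ κ).ord A ∧
      Nonempty ((A 0).carrier ≃[L] D.carrier) ∧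
      (∀ α β : Ordinal.{u}, α < β → β < (Order.succ κ).ord → (∃ β', β = β' + 1) →
        W.toAbstractClass.IsLimitModelOver κ γ (A β) (A α)) ∧
      ∃ B, IsUnionOf (Order.succ κ).ord A B ∧ Nonempty (B.carrier ≃[L] F.carrier) := by
  have hκ0 : ℵ₀ ≤ κ := le_trans le_add_self hκ
  have hM := master W κ D hκ0 hcat hD hDcard
  set Θ := (Order.succ κ).ord with hΘdef
  have hΘlim : Order.IsSuccLimit Θ := theta_isLimit hκ0
  have hγ0 : (0 : Ordinal.{u}) < γ := hγ.pos
  -- basic facts about the master chain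
  have hmem : ∀ i, i < Θ → chain W κ D i ∈ W.K := fun i hi => (hM i hi).1.1
  have hcard : ∀ i, i < Θ → #(chain W κ D i).carrier = κ := fun i hi => (hM i hi).1.2
  have hstrong : ∀ i j, i < j → j < Θ → W.strong (chain W κ D i) (chain W κ D j) :=
    fun i j hij hj => (hM j hj).2.1 i hij
  have hmono : ∀ i j, i ≤ j → j < Θ → (chain W κ D i).carrier ⊆ (chain W κ D j).carrier := by
    intro i j hij hj
    rcases lt_or_eq_of_le hij with h | rfl
    · exact (W.sub_of_strong (hstrong i j h hj)).1
    · exact subset_rfl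
  have hcont : ∀ i, i < Θ → Order.IsSuccLimit i →
      (chain W κ D i).carrier = ⋃ j ∈ Set.Iio i, (chain W κ D j).carrier :=
    fun i hi hil => (hM i hi).2.2 hil
  have hsucclt : ∀ i : Ordinal.{u}, i < Θ → i + 1 < Θ := by
    intro i hi
    rw [Ordinal.add_one_eq_succ]
    exact hΘlim.succ_lt hi
  have hspec : ∀ i, i < Θ →
      W.toAbstractClass.UnivOver (chain W κ D (i + 1)) (chain W κ D i) ∧
        ∃ u, u ∈ (chain W κ D (i + 1)).carrier ∧ u ∉ (chain W κ D i).carrier := by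
    intro i hi
    have h := uext_spec W hcat (hmem i hi) (hcard i hi)
    rw [← chain_succ W κ D i] at h
    exact ⟨h.2.2.1, h.2.2.2.2⟩
  have hmulθ : ∀ i, i < Θ → γ * i < Θ := fun i hi => mul_lt_theta hκ0 hγκ hi
  have hltadd : ∀ a b : Ordinal.{u}, 0 < b → a < a + b := by
    intro a b hb
    have := add_lt_add_right hb a
    rwa [add_zero] at this
  have hle_mul : ∀ i : Ordinal.{u}, i ≤ γ * i := by
    intro i
    calc i = 1 * i := (one_mul i).symm
      _ ≤ γ * i := mul_le_mul_left (Order.one_le_iff_pos.2 hγ0) i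
  -- the filtration
  have hAchain : W.toAbstractClass.IsCtsChain Θ (fun i => chain W κ D (γ * i)) := by
    refine ⟨?_, ?_, ?_⟩
    · exact fun i hi => hmem _ (hmulθ i hi)
    · exact fun i j hij hj =>
        hstrong _ _ ((mul_lt_mul_iff_of_pos_left hγ0).2 hij) (hmulθ j hj)
    · -- continuity of the filtration
      intro i hi hil
      dsimp only
      have hgl : Order.IsSuccLimit (γ * i) := Ordinal.isSuccLimit_mul hγ0 hil
      rw [hcont _ (hmulθ i hi) hgl]
      ext v
      simp only [Set.mem_iUnion, Set.mem_Iio, exists_prop]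
      constructor
      · rintro ⟨k, hk, hv⟩
        obtain ⟨j, hj, hkj⟩ := (Ordinal.lt_mul_iff_of_isSuccLimit hil).1 hk
        exact ⟨j, hj, hmono _ _ hkj.le (hmulθ j (hj.trans hi)) hv⟩
      · rintro ⟨j, hj, hv⟩
        exact ⟨γ * j, (mul_lt_mul_iff_of_pos_left hγ0).2 hj, hv⟩
  refine ⟨fun i => chain W κ D (γ * i), hAchain, ?_, ?_, ?_⟩
  · -- A 0 ≅ D
    have h0 : chain W κ D (γ * 0) = D := by rw [mul_zero, chain_zero]
    dsimp only
    show Nonempty ((chain W κ D (γ * 0)).carrier ≃[L] D.carrier)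
    rw [h0]
    exact ⟨FirstOrder.Language.Equiv.refl L D.carrier⟩
  · -- limit models
    rintro α β hαβ hβΘ ⟨δ, rfl⟩
    have hαδ : α ≤ δ := by
      rw [Ordinal.add_one_eq_succ] at hαβ
      exact Order.lt_succ_iff.1 hαβ
    have hδΘ : δ < Θ := lt_trans (by
      rw [Ordinal.add_one_eq_succ]; exact Order.lt_succ δ) hβΘ
    have hαΘ : α < Θ := lt_of_le_of_lt hαδ hδΘ
    have hγδΘ : γ * δ < Θ := hmulθ δ hδΘ
    have hγαΘ : γ * α < Θ := hmulθ α hαΘ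
    have hγαδ : γ * α ≤ γ * δ := mul_le_mul_right hαδ γ
    have haddθ : ∀ lam : Ordinal.{u}, lam ≤ γ → γ * δ + lam < Θ := by
      intro lam hlam
      exact add_lt_theta hκ0 hγδΘ (lt_of_le_of_lt hlam hγκ)
    dsimp only
    have hmulsucc : γ * (δ + 1) = γ * δ + γ := by
      rw [Ordinal.add_one_eq_succ, Ordinal.mul_succ]
    rw [hmulsucc]
    refine ⟨fun i => if i = 0 then chain W κ D (γ * α) else chain W κ D (γ * δ + i),
      if_pos rfl, ⟨?_, ?_, ?_⟩, ⟨?_, ?_⟩, ?_, ?_⟩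
    · -- membership
      intro i hi
      dsimp only
      by_cases h0 : i = 0
      · rw [if_pos h0]; exact hmem _ hγαΘ
      · rw [if_neg h0]; exact hmem _ (haddθ i hi.le)
    · -- strong chain
      intro i j hij hj
      have hj0 : j ≠ 0 := by
        intro h; rw [h] at hij; exact lt_irrefl _ (lt_of_lt_of_le hij (zero_le (a := i)))
      dsimp only
      rw [if_neg hj0]
      have hjlt : γ * δ + j < Θ := haddθ j hj.le
      by_cases h0 : i = 0
      · rw [if_pos h0]
        exact hstrong _ _ (lt_of_le_of_lt hγαδ
          (hltadd _ _ (pos_iff_ne_zero.2 hj0))) hjlt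
      · rw [if_neg h0]
        exact hstrong _ _ (add_lt_add_right hij _) hjlt
    · -- continuity
      intro lam hlam hlaml
      dsimp only
      rw [if_neg hlaml.pos.ne']
      have hll : Order.IsSuccLimit (γ * δ + lam) := Ordinal.isSuccLimit_add _ hlaml
      rw [hcont _ (haddθ lam hlam.le) hll]
      ext v
      simp only [Set.mem_iUnion, Set.mem_Iio, exists_prop]
      constructor
      · rintro ⟨k, hk, hv⟩
        by_cases hk1 : k < γ * δ + 1
        · refine ⟨1, Ordinal.one_lt_of_isSuccLimit hlaml, ?_⟩
          rw [if_neg one_ne_zero]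
          exact hmono _ _ hk1.le (haddθ 1 (Order.one_le_iff_pos.2 hγ0)) hv
        · push_neg at hk1
          have hγδk : γ * δ ≤ k := le_trans (le_of_lt (hltadd _ _ zero_lt_one)) hk1
          have hkk : γ * δ + (k - γ * δ) = k := Ordinal.add_sub_cancel_of_le hγδk
          have hk'lam : k - γ * δ < lam := by
            have := hkk ▸ hk
            exact (add_lt_add_iff_left (γ * δ)).1 this
          have hk1lam : k - γ * δ + 1 < lam := by
            rw [Ordinal.add_one_eq_succ]
            exact hlaml.succ_lt hk'lam
          refine ⟨k - γ * δ + 1, hk1lam, ?_⟩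
          rw [if_neg (by
            rw [Ordinal.add_one_eq_succ]; exact Ordinal.succ_ne_zero _)]
          refine hmono _ _ ?_ (haddθ _ (le_of_lt (hk1lam.trans_le hlam.le))) hv
          calc k = γ * δ + (k - γ * δ) := hkk.symm
            _ ≤ γ * δ + (k - γ * δ) + 1 := le_of_lt (hltadd _ _ zero_lt_one)
            _ = γ * δ + (k - γ * δ + 1) := add_assoc _ _ 1
      · rintro ⟨j, hj, hv⟩
        by_cases hj0 : j = 0
        · rw [if_pos hj0] at hv
          refine ⟨γ * α, ?_, hv⟩
          exact lt_of_le_of_lt hγαδ (hltadd _ _ hlaml.pos)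
        · rw [if_neg hj0] at hv
          exact ⟨γ * δ + j, add_lt_add_right hj _, hv⟩
    · -- union carrier
      have hll : Order.IsSuccLimit (γ * δ + γ) := Ordinal.isSuccLimit_add _ hγ
      rw [hcont _ (haddθ γ le_rfl) hll]
      ext v
      simp only [Set.mem_iUnion, Set.mem_Iio, exists_prop]
      constructor
      · rintro ⟨k, hk, hv⟩
        by_cases hk1 : k < γ * δ + 1
        · refine ⟨1, Ordinal.one_lt_of_isSuccLimit hγ, ?_⟩
          rw [if_neg one_ne_zero]
          exact hmono _ _ hk1.le (haddθ 1 (Order.one_le_iff_pos.2 hγ0)) hv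
        · push_neg at hk1
          have hγδk : γ * δ ≤ k := le_trans (le_of_lt (hltadd _ _ zero_lt_one)) hk1
          have hkk : γ * δ + (k - γ * δ) = k := Ordinal.add_sub_cancel_of_le hγδk
          have hk'lam : k - γ * δ < γ := by
            have := hkk ▸ hk
            exact (add_lt_add_iff_left (γ * δ)).1 this
          have hk1lam : k - γ * δ + 1 < γ := by
            rw [Ordinal.add_one_eq_succ]
            exact hγ.succ_lt hk'lam
          refine ⟨k - γ * δ + 1, hk1lam, ?_⟩
          rw [if_neg (by
            rw [Ordinal.add_one_eq_succ]; exact Ordinal.succ_ne_zero _)]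
          refine hmono _ _ ?_ (haddθ _ hk1lam.le) hv
          calc k = γ * δ + (k - γ * δ) := hkk.symm
            _ ≤ γ * δ + (k - γ * δ) + 1 := le_of_lt (hltadd _ _ zero_lt_one)
            _ = γ * δ + (k - γ * δ + 1) := add_assoc _ _ 1
      · rintro ⟨j, hj, hv⟩
        by_cases hj0 : j = 0
        · rw [if_pos hj0] at hv
          refine ⟨γ * α, lt_of_le_of_lt hγαδ (hltadd _ _ hγ0), hv⟩
        · rw [if_neg hj0] at hv
          exact ⟨γ * δ + j, add_lt_add_right hj _, hv⟩
    · -- each member is a substructure of the union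
      intro i hi
      dsimp only
      apply W.sub_of_strong
      by_cases h0 : i = 0
      · rw [if_pos h0]
        exact hstrong _ _ (lt_of_le_of_lt hγαδ (hltadd _ _ hγ0)) (haddθ γ le_rfl)
      · rw [if_neg h0]
        exact hstrong _ _ (add_lt_add_right hi _) (haddθ γ le_rfl)
    · -- universality at successors
      intro i hi
      have hi1 : i + 1 ≠ 0 := by
        rw [Ordinal.add_one_eq_succ]; exact Ordinal.succ_ne_zero i
      dsimp only
      rw [if_neg hi1]
      by_cases h0 : i = 0
      · subst h0
        rw [if_pos rfl, zero_add]
        have hbase := (hspec (γ * α) hγαΘ).1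
        have h1 : γ * α + 1 ≤ γ * δ + 1 := add_le_add_left hγαδ 1
        rcases lt_or_eq_of_le h1 with h2 | h2
        · exact univOver_mono W hbase
            (hstrong _ _ h2 (haddθ 1 (Order.one_le_iff_pos.2 hγ0)))
        · rw [← h2]
          exact hbase
      · rw [if_neg h0]
        have := (hspec (γ * δ + i) (haddθ i hi.le)).1
        rwa [add_assoc] at this
    · -- cardinality κ
      intro i hi
      dsimp only
      by_cases h0 : i = 0
      · rw [if_pos h0]; exact hcard _ hγαΘ
      · rw [if_neg h0]; exact hcard _ (haddθ i hi.le)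
  · -- union of the filtration, isomorphic to F
    obtain ⟨B, hBu, hBK, hBstr⟩ := W.chain_union Θ hΘlim _ hAchain
    refine ⟨B, hBu, ?_⟩
    have hBcard : #B.carrier = Order.succ κ := by
      refine le_antisymm ?_ ?_
      · rw [hBu.1]
        refine mk_biUnion_Iio_le (le_trans hκ0 (Order.le_succ κ)) (Cardinal.card_ord _).le ?_
        intro j hj
        exact le_trans (hcard _ (hmulθ j hj)).le (Order.le_succ κ)
      · set e := (Ordinal.ToType.mk (o := Θ)) with hedef
        have hNew : ∀ x : Θ.ToType, ∃ u,
            u ∈ (chain W κ D ((e.symm x).1 + 1)).carrier ∧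
              u ∉ (chain W κ D (e.symm x).1).carrier :=
          fun x => (hspec _ (e.symm x).2).2
        choose uu hu1 hu2 using hNew
        have humem : ∀ x : Θ.ToType, uu x ∈ B.carrier := by
          intro x
          have hj : (e.symm x).1 < Θ := (e.symm x).2
          have hj1 : (e.symm x).1 + 1 < Θ := hsucclt _ hj
          have h1 : (chain W κ D ((e.symm x).1 + 1)).carrier ⊆
              (chain W κ D (γ * ((e.symm x).1 + 1))).carrier :=
            hmono _ _ (hle_mul _) (hmulθ _ hj1)
          exact (hBu.2 _ hj1).1 (h1 (hu1 x))
        have haux : ∀ x y : Θ.ToType, (e.symm x).1 < (e.symm y).1 → uu x ≠ uu y := by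
          intro x y hxy heq
          apply hu2 y
          rw [← heq]
          have h1 : (e.symm x).1 + 1 ≤ (e.symm y).1 := by
            rw [Ordinal.add_one_eq_succ]; exact Order.succ_le_of_lt hxy
          exact hmono _ _ h1 (e.symm y).2 (hu1 x)
        have hinj : Function.Injective fun x : Θ.ToType => (⟨uu x, humem x⟩ : B.carrier) := by
          intro x y hxy
          simp only [Subtype.mk.injEq] at hxy
          by_contra hne
          have hsymm : e.symm x ≠ e.symm y := fun h => hne (by
            have h2 := congrArg e h
            rwa [OrderIso.apply_symm_apply, OrderIso.apply_symm_apply] at h2)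
          have hne1 : (e.symm x).1 ≠ (e.symm y).1 := fun h => hsymm (Subtype.ext h)
          rcases hne1.lt_or_gt with h | h
          · exact haux x y h hxy
          · exact haux y x h hxy.symm
        calc Order.succ κ = Θ.card := (Cardinal.card_ord _).symm
          _ = #Θ.ToType := (Cardinal.mk_toType Θ).symm
          _ ≤ #B.carrier := Cardinal.mk_le_of_injective hinj
    obtain ⟨F0, hF0K, hF0c, huniq⟩ := hcat.1
    obtain ⟨e1⟩ := huniq B hBK hBcard
    obtain ⟨e2⟩ := huniq F hF hFcard
    exact ⟨e2.symm.comp e1⟩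
end

section
/- For every type α and every element x of the free group on α with x ≠ 1, there exists k ∈ ℕ such that there is no z in the free group on α with z^(2^k) = x. In other words, a free group contains no nontrivial 2-divisible element. (Key claim in the verification of the Construction Principle CP(K, ∗) for free products of infinite cyclic groups: Lemma 5.8, Case 2 with n = ∞.) -/
namespace Statement12Aux

open FreeGroup List

variable {α : Type*} [DecidableEq α]

/-- The "no cancellation" relation between adjacent letters. -/
def R (p q : α × Bool) : Prop := ¬(p.1 = q.1 ∧ p.2 = !q.2)

lemma chain'_reduce (L : List (α × Bool)) : List.Chain' (R (α := α)) (FreeGroup.reduce L) := by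
  induction L with
  | nil => exact List.isChain_nil
  | cons x L ih =>
    rw [FreeGroup.reduce.cons]
    cases h : FreeGroup.reduce L with
    | nil => exact List.isChain_singleton _
    | cons hd tl =>
      rw [h] at ih
      by_cases hc : x.1 = hd.1 ∧ x.2 = !hd.2
      · simp only [hc, and_self, if_true]
        exact ih.tail
      · simp only [hc, if_false]
        exact List.isChain_cons_cons.2 ⟨hc, ih⟩

lemma reduce_eq_self_of_chain' {L : List (α × Bool)} (h : List.Chain' (R (α := α)) L) :
    FreeGroup.reduce L = L := by
  induction L with
  | nil => rfl
  | cons x L ih =>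
    rw [FreeGroup.reduce.cons, ih h.tail]
    cases L with
    | nil => rfl
    | cons hd tl =>
      have hr : R x hd := (List.isChain_cons_cons.1 h).1
      show (if x.1 = hd.1 ∧ x.2 = !hd.2 then tl else x :: hd :: tl) = x :: hd :: tl
      rw [if_neg hr]

lemma chain'_toWord (x : FreeGroup α) : List.Chain' (R (α := α)) x.toWord := by
  rw [← FreeGroup.reduce_toWord]
  exact chain'_reduce _

/-- Cancellation lemma: the reduction of a concatenation of reduced words is a prefix of the
first glued to a suffix of the second. -/
lemma reduce_append_aux : ∀ (n : ℕ) (M N : List (α × Bool)), M.length ≤ n →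
    List.Chain' (R (α := α)) M → List.Chain' (R (α := α)) N →
    ∃ A B, FreeGroup.reduce (M ++ N) = A ++ B ∧ A <+: M ∧ B <:+ N := by
  intro n
  induction n with
  | zero =>
    intro M N hlen hM hN
    have hMnil : M = [] := List.length_eq_zero_iff.1 (Nat.le_zero.1 hlen)
    subst hMnil
    exact ⟨[], N, by simp [reduce_eq_self_of_chain' hN], List.nil_prefix, List.suffix_refl _⟩
  | succ n ih =>
    intro M N hlen hM hN
    rcases List.eq_nil_or_concat M with rfl | ⟨M', p, rfl⟩
    · exact ⟨[], N, by simp [reduce_eq_self_of_chain' hN], List.nil_prefix, List.suffix_refl _⟩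
    simp only [List.concat_eq_append] at hM hlen ⊢
    cases N with
    | nil =>
      exact ⟨M' ++ [p], [], by simp [reduce_eq_self_of_chain' hM],
        List.prefix_refl _, List.suffix_refl _⟩
    | cons q N' =>
      by_cases hc : p.1 = q.1 ∧ p.2 = !q.2
      · -- cancellation at the junction
        have hq : q = (p.1, !p.2) := by
          obtain ⟨h1, h2⟩ := hc
          obtain ⟨q1, q2⟩ := q
          obtain ⟨p1, p2⟩ := p
          simp_all
        have hstep : FreeGroup.Red.Step ((M' ++ [p]) ++ q :: N') (M' ++ N') := by
          have heq : (M' ++ [p]) ++ q :: N' = M' ++ (p.1, p.2) :: (p.1, !p.2) :: N' := by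
            simp [hq]
          rw [heq]
          exact FreeGroup.Red.Step.not
        have hred := FreeGroup.reduce.Step.eq hstep
        have hlen' : M'.length ≤ n := by
          simp only [List.length_append, List.length_cons, List.length_nil] at hlen
          omega
        obtain ⟨A, B, hAB, hA, hB⟩ := ih M' N' hlen'
          (hM.prefix ⟨[p], rfl⟩) (hN.suffix ⟨[q], rfl⟩)
        exact ⟨A, B, hred ▸ hAB, hA.trans ⟨[p], rfl⟩, hB.trans ⟨[q], rfl⟩⟩
      · -- no cancellation: the whole word is reduced
        have hch : List.Chain' (R (α := α)) ((M' ++ [p]) ++ q :: N') := by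
          rw [List.Chain', List.isChain_append]
          refine ⟨hM, hN, ?_⟩
          intro x hx y hy
          have hx' : x = p := by
            rw [List.getLast?_concat] at hx
            exact (Option.mem_some_iff.1 hx).symm
          have hy' : y = q := (Option.mem_some_iff.1 hy).symm
          rw [hx', hy']
          exact hc
        exact ⟨M' ++ [p], q :: N', by rw [reduce_eq_self_of_chain' hch],
          List.prefix_refl _, List.suffix_refl _⟩

lemma reduce_append (M N : List (α × Bool)) (hM : List.Chain' (R (α := α)) M)
    (hN : List.Chain' (R (α := α)) N) :
    ∃ A B, FreeGroup.reduce (M ++ N) = A ++ B ∧ A <+: M ∧ B <:+ N :=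
  reduce_append_aux M.length M N le_rfl hM hN

/-- Key lemma: squaring a nontrivial element of a free group strictly increases the norm. -/
lemma norm_lt_norm_sq_aux : ∀ (n : ℕ) (z : FreeGroup α), FreeGroup.norm z ≤ n → z ≠ 1 →
    FreeGroup.norm z < FreeGroup.norm (z * z) := by
  intro n
  induction n with
  | zero =>
    intro z h hz
    exact absurd (FreeGroup.norm_eq_zero.1 (Nat.le_zero.1 h)) hz
  | succ n ih =>
    intro z hlen hz
    have hL : List.Chain' (R (α := α)) z.toWord := chain'_toWord z
    have hLne : z.toWord ≠ [] := fun h => hz (FreeGroup.toWord_eq_nil_iff.1 h)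
    cases hLw : z.toWord with
    | nil => exact absurd hLw hLne
    | cons h T =>
    obtain ⟨l, hlast⟩ : ∃ l, z.toWord.getLast? = some l := by
      rcases Option.eq_none_or_eq_some z.toWord.getLast? with he | ⟨l, hl⟩
      · exact absurd (List.getLast?_eq_none_iff.1 he) hLne
      · exact ⟨l, hl⟩
    by_cases hc : R l h
    · -- cyclically reduced case
      have hch : List.Chain' (R (α := α)) (z.toWord ++ z.toWord) := by
        rw [List.Chain', List.isChain_append]
        refine ⟨hL, hL, ?_⟩
        intro x hx y hy
        have hx' : x = l := by rw [hlast] at hx; exact (Option.mem_some_iff.1 hx).symm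
        have hy' : y = h := by
          rw [hLw] at hy
          exact (Option.mem_some_iff.1 hy).symm
        rw [hx', hy']; exact hc
      have hmul : z * z = FreeGroup.mk (z.toWord ++ z.toWord) := by
        rw [← FreeGroup.mul_mk, FreeGroup.mk_toWord]
      have htw : (z * z).toWord = z.toWord ++ z.toWord := by
        rw [hmul, FreeGroup.toWord_mk, reduce_eq_self_of_chain' hch]
      have hpos : 0 < z.toWord.length := by rw [hLw]; simp
      simp only [FreeGroup.norm, htw, List.length_append]
      omega
    · -- non cyclically reduced case: peel off conjugation
      have hc' : l.1 = h.1 ∧ l.2 = !h.2 := not_not.1 hc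
      have hTne : T ≠ [] := by
        rintro rfl
        rw [hLw] at hlast
        simp only [List.getLast?_singleton, Option.some.injEq] at hlast
        subst hlast
        simp at hc'
      obtain ⟨M, l', rfl⟩ := (List.eq_nil_or_concat T).resolve_left hTne
      simp only [List.concat_eq_append] at hLw hTne
      have hl' : l' = l := by
        rw [hLw] at hlast
        have heq2 : (h :: (M ++ [l'])).getLast? = some l' := by
          rw [show h :: (M ++ [l']) = (h :: M) ++ [l'] by simp, List.getLast?_concat]
        rw [heq2] at hlast
        injection hlast
      subst hl'
      rw [hLw] at hL
      have hM : List.Chain' (R (α := α)) M := hL.tail.prefix ⟨[l'], rfl⟩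
      have hleq : l' = (h.1, !h.2) := by
        obtain ⟨l1, l2⟩ := l'
        obtain ⟨h1, h2⟩ := h
        simp_all
      have hMne : M ≠ [] := by
        rintro rfl
        have hr : R h l' := (List.isChain_cons_cons.1 hL).1
        exact hr ⟨by rw [hleq], by rw [hleq]; simp⟩
      -- z = g * z' * g⁻¹
      set g : FreeGroup α := FreeGroup.mk [h] with hg
      set z' : FreeGroup α := FreeGroup.mk M with hz'
      have hginv : g⁻¹ = FreeGroup.mk [l'] := by
        rw [hg, FreeGroup.inv_mk]
        congr 1
        rw [hleq]
        rfl
      have hzd : z = g * z' * g⁻¹ := by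
        rw [hginv, hg, hz', FreeGroup.mul_mk, FreeGroup.mul_mk, ← FreeGroup.mk_toWord (x := z),
          hLw]
        congr 1
      have htz' : z'.toWord = M := by
        rw [hz', FreeGroup.toWord_mk, reduce_eq_self_of_chain' hM]
      have hz'ne : z' ≠ 1 := by
        intro e
        rw [e, FreeGroup.toWord_one] at htz'
        exact hMne htz'.symm
      have hnz : FreeGroup.norm z = M.length + 2 := by
        simp only [FreeGroup.norm, hLw, List.length_cons, List.length_append,
          List.length_singleton, List.length_nil]
      have hnz' : FreeGroup.norm z' = M.length := by
        simp [FreeGroup.norm, htz']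
      have hlt : FreeGroup.norm z' < FreeGroup.norm (z' * z') := by
        refine ih z' ?_ hz'ne
        omega
      -- analyse the reduced word of z' * z'
      have hmul' : z' * z' = FreeGroup.mk (M ++ M) := by
        rw [hz', FreeGroup.mul_mk]
      have htwK : (z' * z').toWord = FreeGroup.reduce (M ++ M) := by
        rw [hmul', FreeGroup.toWord_mk]
      obtain ⟨A, B, hAB, hA, hB⟩ := reduce_append M M hM hM
      have hKlen : M.length < A.length + B.length := by
        have : FreeGroup.norm (z' * z') = A.length + B.length := by
          rw [FreeGroup.norm, htwK, hAB, List.length_append]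
        omega
      have hAne : A ≠ [] := by
        rintro rfl
        have := hB.length_le
        simp at hKlen
        omega
      have hBne : B ≠ [] := by
        rintro rfl
        have := hA.length_le
        simp at hKlen
        omega
      -- head and last of the reduced square agree with those of M
      have hheadA : A.head? = M.head? := by
        obtain ⟨t, ht⟩ := hA
        rw [← ht]
        obtain ⟨a, A', rfl⟩ := List.exists_cons_of_ne_nil hAne
        rfl
      have hlastB : B.getLast? = M.getLast? := by
        obtain ⟨t, ht⟩ := hB
        rw [← ht, List.getLast?_append]
        obtain ⟨b, hb⟩ : ∃ b, B.getLast? = some b := by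
          rcases Option.eq_none_or_eq_some B.getLast? with he | hs
          · exact absurd (List.getLast?_eq_none_iff.1 he) hBne
          · exact hs
        rw [hb]; rfl
      -- the conjugated square is reduced as written
      have hchK : List.Chain' (R (α := α)) (A ++ B) := hAB ▸ chain'_reduce (M ++ M)
      have hjr : ∀ x ∈ (A ++ B).getLast?, R x l' := by
        intro x hx
        have hxM : x ∈ M.getLast? := by
          rw [List.getLast?_append] at hx
          obtain ⟨b, hb⟩ : ∃ b, B.getLast? = some b := by
            rcases Option.eq_none_or_eq_some B.getLast? with he | hs
            · exact absurd (List.getLast?_eq_none_iff.1 he) hBne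
            · exact hs
          rw [hb] at hx
          rw [← hlastB, hb]
          exact hx
        -- from hL : Chain' (h :: (M ++ [l']))
        have hML : List.Chain' (R (α := α)) (M ++ [l']) := hL.tail
        have := (List.isChain_append.1 hML).2.2
        exact this x hxM l' rfl
      have hjl : ∀ y ∈ (A ++ B).head?, R h y := by
        intro y hy
        have hyM : y ∈ M.head? := by
          obtain ⟨a, A', rfl⟩ := List.exists_cons_of_ne_nil hAne
          simp only [List.cons_append, List.head?_cons, Option.mem_some_iff] at hy
          rw [← hheadA]
          simp [hy]
        obtain ⟨a, M', rfl⟩ := List.exists_cons_of_ne_nil hMne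
        have hr : R h a := (List.isChain_cons_cons.1 hL).1
        simp only [List.head?_cons, Option.mem_some_iff] at hyM
        rwa [← hyM]
      have hchW : List.Chain' (R (α := α)) (h :: ((A ++ B) ++ [l'])) := by
        rw [List.Chain', List.isChain_cons]
        constructor
        · intro y hy
          obtain ⟨a, A', rfl⟩ := List.exists_cons_of_ne_nil hAne
          simp only [List.cons_append, List.head?_cons, Option.mem_some_iff] at hy
          exact hy ▸ hjl a rfl
        · rw [List.isChain_append]
          exact ⟨hchK, List.isChain_singleton _, fun x hx y hy => by
            have : y = l' := (Option.mem_some_iff.1 hy).symm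
            exact this ▸ hjr x hx⟩
      -- compute the norm of z * z
      have hsq : z * z = FreeGroup.mk (h :: ((A ++ B) ++ [l'])) := by
        have h1 : z * z = g * (z' * z') * g⁻¹ := by rw [hzd]; group
        rw [h1, hginv, ← hAB, ← FreeGroup.mk_toWord (x := z' * z'), htwK, hg,
          FreeGroup.mul_mk, FreeGroup.mul_mk]
        congr 1
      have htwsq : (z * z).toWord = h :: ((A ++ B) ++ [l']) := by
        rw [hsq, FreeGroup.toWord_mk, reduce_eq_self_of_chain' hchW]
      have : FreeGroup.norm (z * z) = A.length + B.length + 2 := by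
        simp only [FreeGroup.norm, htwsq, List.length_cons, List.length_append,
          List.length_singleton, List.length_nil]
      omega

lemma norm_lt_norm_sq (z : FreeGroup α) (hz : z ≠ 1) :
    FreeGroup.norm z < FreeGroup.norm (z * z) :=
  norm_lt_norm_sq_aux (FreeGroup.norm z) z le_rfl hz

end Statement12Aux

/-- a free group contains no nontrivial 2-divisible element: for every
`x ≠ 1` in a free group there is `k : ℕ` such that `x` has no `2^k`-th root. -/
theorem statement12 {α : Type*} (x : FreeGroup α) (hx : x ≠ 1) :
    ∃ k : ℕ, ¬ ∃ z : FreeGroup α, z ^ (2 ^ k) = x := by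
  classical
  refine ⟨FreeGroup.norm x, ?_⟩
  rintro ⟨z, hz⟩
  set k := FreeGroup.norm x with hk
  have key : ∀ i, i ≤ k → i < FreeGroup.norm (z ^ (2 ^ i)) := by
    intro i
    induction i with
    | zero =>
      intro _
      have hzne : z ≠ 1 := by
        rintro rfl
        simp at hz
        exact hx hz.symm
      have : z ^ (2 ^ 0) = z := by norm_num
      rw [this]
      have := FreeGroup.norm_eq_zero (x := z)
      rcases Nat.eq_zero_or_pos (FreeGroup.norm z) with h0 | h0
      · exact absurd (this.1 h0) hzne
      · omega
    | succ i ih =>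
      intro hik
      have hik' : i ≤ k := Nat.le_of_succ_le hik
      have h1 := ih hik'
      have hne : z ^ (2 ^ i) ≠ 1 := by
        intro he
        have : x = 1 := by
          rw [← hz, show 2 ^ k = 2 ^ i * 2 ^ (k - i) by
            rw [← pow_add]; congr 1; omega, pow_mul, he, one_pow]
        exact hx this
      have h2 := Statement12Aux.norm_lt_norm_sq (z ^ (2 ^ i)) hne
      have h3 : z ^ (2 ^ (i + 1)) = z ^ (2 ^ i) * z ^ (2 ^ i) := by
        rw [← pow_add]
        congr 1
        omega
      rw [h3]
      omega
  have := key k le_rfl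
  rw [hz] at this
  omega
end

section
/- Let n ∈ ℕ with n > 2, let ι be a type, and let G = ∗_{i∈ι} G_i be the free product of a family of groups each isomorphic to the cyclic group of order n. Then there is no injective function g : ℕ → G with g(0) ≠ 1 and g(i+1)² = g(i) for every i ∈ ℕ. (Key claim in the verification of the Construction Principle CP(K, ∗) for free products of cyclic groups of fixed finite order n > 2: Lemma 5.8, Case 2.) -/
open Monoid Monoid.CoprodI

namespace St13

variable {ι : Type*} {M : ι → Type*} [∀ i, Group (M i)]

section DecEq

variable [DecidableEq ι] [∀ i, DecidableEq (M i)]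

/-- The length of the reduced word of `x`. -/
def len (x : CoprodI M) : ℕ := (Word.equiv x).toList.length

lemma equiv_eq_smul_empty (x : CoprodI M) : Word.equiv x = x • Word.empty := rfl

lemma prod_equiv (x : CoprodI M) : (Word.equiv x).prod = x :=
  Word.equiv.symm_apply_apply x

lemma equiv_prod (w : Word M) : Word.equiv w.prod = w :=
  Word.equiv.apply_symm_apply w

lemma rcons_length_le {i : ι} (p : Word.Pair M i) :
    (Word.rcons p).toList.length ≤ p.tail.toList.length + 1 := by
  rw [Word.rcons]
  split <;> simp [Word.cons]

lemma le_rcons_length {i : ι} (p : Word.Pair M i) :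
    p.tail.toList.length ≤ (Word.rcons p).toList.length := by
  rw [Word.rcons]
  split <;> simp [Word.cons]

lemma tail_length_le (i : ι) (w : Word M) :
    (Word.equivPair i w).tail.toList.length ≤ w.toList.length := by
  have h : Word.rcons (Word.equivPair i w) = w := by
    rw [← Word.equivPair_symm, Equiv.symm_apply_apply]
  calc (Word.equivPair i w).tail.toList.length
      ≤ (Word.rcons (Word.equivPair i w)).toList.length := le_rcons_length _
    _ = w.toList.length := by rw [h]

lemma smul_length_le (i : ι) (m : M i) (w : Word M) :
    (of m • w).toList.length ≤ w.toList.length + 1 := by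
  rw [Word.of_smul_def]
  refine le_trans (rcons_length_le _) ?_
  exact Nat.add_le_add_right (tail_length_le i w) 1

lemma prod_smul_length_le (v : Word M) (w : Word M) :
    (v.prod • w).toList.length ≤ v.toList.length + w.toList.length := by
  induction v using Word.consRecOn with
  | empty => simp
  | cons i m v h1 h2 ih =>
    rw [Word.prod_cons, mul_smul]
    refine le_trans (smul_length_le i m _) ?_
    simp only [Word.cons]
    simp only [List.length_cons]; omega

lemma len_mul_le (x y : CoprodI M) : len (x * y) ≤ len x + len y := by
  have h1 : Word.equiv (x * y) = x • Word.equiv y := by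
    rw [equiv_eq_smul_empty, equiv_eq_smul_empty, mul_smul]
  have h2 : x • Word.equiv y = (Word.equiv x).prod • Word.equiv y := by
    rw [prod_equiv]
  unfold len
  rw [h1, h2]
  exact prod_smul_length_le _ _

lemma len_one : len (1 : CoprodI M) = 0 := by
  have : Word.equiv (1 : CoprodI M) = Word.empty := by
    rw [equiv_eq_smul_empty, one_smul]
  simp [len, this, Word.empty]

lemma len_pow_le (x : CoprodI M) (k : ℕ) : len (x ^ k) ≤ k * len x := by
  induction k with
  | zero => simp [len_one]
  | succ k ih =>
    rw [pow_succ]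
    calc len (x ^ k * x) ≤ len (x ^ k) + len x := len_mul_le _ _
      _ ≤ k * len x + len x := Nat.add_le_add_right ih _
      _ = (k + 1) * len x := by ring

lemma len_of_le (i : ι) (m : M i) : len (of m : CoprodI M) ≤ 1 := by
  unfold len
  rw [equiv_eq_smul_empty, Word.of_smul_def,
    Word.equivPair_eq_of_fstIdx_ne (by simp [Word.fstIdx, Word.empty] : Word.fstIdx (Word.empty : Word M) ≠ some i)]
  rw [Word.rcons]
  split <;> simp [Word.cons, Word.empty]

/-- product of a list of letters -/
def lprod (l : List (Σ i, M i)) : CoprodI M := (l.map fun p => of p.2).prod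

lemma lprod_nil : lprod ([] : List (Σ i, M i)) = 1 := rfl

lemma lprod_append (l₁ l₂ : List (Σ i, M i)) :
    lprod (l₁ ++ l₂) = lprod l₁ * lprod l₂ := by
  simp [lprod]

lemma lprod_singleton (p : (Σ i, M i)) : lprod [p] = of p.2 := by
  simp [lprod]

lemma word_prod_eq (w : Word M) : w.prod = lprod w.toList := rfl

lemma len_lprod_le (l : List (Σ i, M i)) : len (lprod l) ≤ l.length := by
  induction l with
  | nil => simp [lprod_nil, len_one]
  | cons p l ih =>
    have : lprod (p :: l) = of p.2 * lprod l := by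
      have := lprod_append [p] l
      simpa [lprod_singleton] using this
    rw [this]
    have hof : len (of p.2 : CoprodI M) ≤ 1 := len_of_le p.1 p.2
    calc len (of p.2 * lprod l) ≤ len (of p.2) + len (lprod l) := len_mul_le _ _
      _ ≤ 1 + l.length := Nat.add_le_add hof ih
      _ = (p :: l).length := by simp [Nat.add_comm]

/-- A word is cyclically reduced if it has length ≤ 1 or its first and
last letters lie in different factors. -/
def CycRed (w : Word M) : Prop :=
  w.toList.length ≤ 1 ∨
    w.toList.head?.map Sigma.fst ≠ w.toList.getLast?.map Sigma.fst

/-- Powers of a cyclically reduced word of length ≥ 2 have word length growing linearly. -/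
lemma len_pow_of_cycred (w : Word M) (hlen : 2 ≤ w.toList.length)
    (hcyc : w.toList.head?.map Sigma.fst ≠ w.toList.getLast?.map Sigma.fst) (N : ℕ) :
    len (w.prod ^ (N + 1)) = (N + 1) * w.toList.length := by
  have hne : w.toList ≠ [] := List.ne_nil_of_length_pos (by omega)
  -- main induction: construct the word of w.prod ^ (N+1)
  have key : ∀ N : ℕ, ∃ W : Word M, W.prod = w.prod ^ (N + 1) ∧
      W.toList.length = (N + 1) * w.toList.length ∧
      W.toList.head? = w.toList.head? := by
    intro N
    induction N with
    | zero => exact ⟨w, by simp, by simp, rfl⟩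
    | succ N ih =>
      obtain ⟨W, hW1, hW2, hW3⟩ := ih
      have hWne : W.toList ≠ [] := by
        intro h
        rw [h] at hW2
        simp only [List.length_nil] at hW2
        rcases Nat.mul_eq_zero.mp hW2.symm with h' | h' <;> omega
      have hjunction : ∀ x ∈ w.toList.getLast?, ∀ y ∈ W.toList.head?,
          x.1 ≠ (y : Σ i, M i).1 := by
        intro x hx y hy hxy
        apply hcyc
        rw [hW3, List.head?_eq_head hne] at hy
        rw [List.getLast?_eq_getLast hne] at hx
        have hx' : w.toList.getLast hne = x := by simpa using hx
        have hy' : w.toList.head hne = y := by simpa using hy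
        rw [List.head?_eq_head hne, List.getLast?_eq_getLast hne,
          Option.map_some, Option.map_some, hx', hy', hxy]
      refine ⟨⟨w.toList ++ W.toList, ?_, ?_⟩, ?_, ?_, ?_⟩
      · intro l hl
        rcases List.mem_append.mp hl with h | h
        · exact w.ne_one l h
        · exact W.ne_one l h
      · exact w.chain_ne.append W.chain_ne hjunction
      · show lprod (w.toList ++ W.toList) = _
        rw [lprod_append, ← word_prod_eq, ← word_prod_eq, hW1, ← pow_succ']
      · simp only [List.length_append, hW2]
        ring
      · show (w.toList ++ W.toList).head? = _
        rw [List.head?_append_of_ne_nil _ hne]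
  obtain ⟨W, hW1, hW2, _⟩ := key N
  rw [← hW1]
  unfold len
  rw [equiv_prod]
  exact hW2

/-- Every element is conjugate to an element with cyclically reduced word. -/
lemma exists_cycred_conj (x : CoprodI M) :
    ∃ (c : CoprodI M) (w : Word M), CycRed w ∧ x = c * w.prod * c⁻¹ := by
  generalize hd : len x = D
  induction D using Nat.strong_induction_on generalizing x with
  | _ D ih =>
  subst hd
  set w := Word.equiv x with hw
  have hx : x = w.prod := (prod_equiv x).symm
  by_cases hcyc : CycRed w
  · exact ⟨1, w, hcyc, by simpa using hx⟩
  · unfold CycRed at hcyc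
    push_neg at hcyc
    obtain ⟨hlen, heq⟩ := hcyc
    have hlen2 : 2 ≤ w.toList.length := by omega
    have hne : w.toList ≠ [] := by
      intro h; rw [h] at hlen2; simp at hlen2
    -- first and last letters
    rcases hhead : w.toList.head hne with ⟨j₁, a⟩
    rcases hlast : w.toList.getLast hne with ⟨j₂, b⟩
    have hj : j₁ = j₂ := by
      rw [List.head?_eq_head hne, List.getLast?_eq_getLast hne, hhead, hlast] at heq
      simpa using heq
    subst hj
    -- decompose the list
    have hdecomp : w.toList = ⟨j₁, a⟩ :: (w.toList.tail.dropLast ++ [⟨j₁, b⟩]) := by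
      conv_lhs => rw [← List.cons_head_tail hne, hhead]
      congr 1
      have htne : w.toList.tail ≠ [] := by
        intro h
        have := List.length_tail (l := w.toList)
        rw [h] at this
        simp at this
        omega
      have : w.toList.tail.getLast htne = ⟨j₁, b⟩ := by
        rw [← hlast]
        rw [List.getLast_tail]
      rw [← this]
      exact (List.dropLast_append_getLast htne).symm
    set mid := w.toList.tail.dropLast with hmid
    have hxeq : x = of a * lprod mid * of b := by
      rw [hx, word_prod_eq, hdecomp]
      have : (⟨j₁, a⟩ :: (mid ++ [⟨j₁, b⟩]) : List (Σ i, M i))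
          = [⟨j₁, a⟩] ++ mid ++ [⟨j₁, b⟩] := by simp
      rw [this, lprod_append, lprod_append, lprod_singleton, lprod_singleton]
    have hmidlen : mid.length = w.toList.length - 2 := by
      have h1 := congrArg List.length hdecomp
      simp at h1
      omega
    -- conjugate by of b
    set x' := of b * x * (of b)⁻¹ with hx'
    have hx'eq : x' = of (b * a) * lprod mid := by
      rw [hx', hxeq]
      rw [map_mul]
      group
    have hlenx' : len x' < len x := by
      have h1 : len x' ≤ len (of (b * a) : CoprodI M) + len (lprod mid) := by
        rw [hx'eq]; exact len_mul_le _ _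
      have h2 : len (of (b * a) : CoprodI M) ≤ 1 := len_of_le j₁ (b * a)
      have h3 : len (lprod mid) ≤ mid.length := len_lprod_le mid
      have h4 : len x = w.toList.length := by
        unfold len
        rw [← hw]
      omega
    obtain ⟨c, w', hcyc', hconj⟩ := ih (len x') hlenx' x' rfl
    refine ⟨(of b)⁻¹ * c, w', hcyc', ?_⟩
    have : x = (of b)⁻¹ * x' * of b := by
      rw [hx']; group
    rw [this, hconj]
    group

/-- `x` is conjugate to an element coming from a word of length ≤ 1 -/
def ConjSmall (x : CoprodI M) : Prop :=
  ∃ (c : CoprodI M) (w : Word M), w.toList.length ≤ 1 ∧ x = c * w.prod * c⁻¹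

lemma exists_small_word (i : ι) (a : M i) :
    ∃ w : Word M, w.toList.length ≤ 1 ∧ w.prod = of a := by
  by_cases ha : a = 1
  · exact ⟨Word.empty, by simp [Word.empty], by simp [ha]⟩
  · refine ⟨⟨[⟨i, a⟩], ?_, ?_⟩, ?_, ?_⟩
    · intro l hl; simp at hl; subst hl; exact ha
    · simp
    · simp
    · rw [word_prod_eq]; exact lprod_singleton _

lemma conjSmall_sq {x : CoprodI M} (h : ConjSmall x) : ConjSmall (x ^ 2) := by
  obtain ⟨c, w, hlen, rfl⟩ := h
  interval_cases h : w.toList.length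
  · -- length 0 : w.prod = 1
    have : w = Word.empty := Word.ext (List.length_eq_zero_iff.mp h)
    subst this
    refine ⟨c, Word.empty, by simp [Word.empty], ?_⟩
    simp [pow_two]
  · -- length 1 : w.prod = of a
    obtain ⟨p, hp⟩ := List.length_eq_one_iff.mp h
    have hw : w.prod = of p.2 := by
      rw [word_prod_eq, hp, lprod_singleton]
    obtain ⟨w', hw'len, hw'⟩ := exists_small_word p.1 (p.2 * p.2)
    refine ⟨c, w', hw'len, ?_⟩
    rw [hw', hw]
    rw [pow_two]
    rw [map_mul]
    group

lemma conjSmall_pow_eq_one {x : CoprodI M} (n : ℕ)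
    (hexp : ∀ (i : ι) (a : M i), a ^ n = 1) (h : ConjSmall x) : x ^ n = 1 := by
  obtain ⟨c, w, hlen, rfl⟩ := h
  interval_cases h : w.toList.length
  · have : w = Word.empty := Word.ext (List.length_eq_zero_iff.mp h)
    subst this
    rw [conj_pow, Word.prod_empty, one_pow, mul_one, mul_inv_cancel]
  · obtain ⟨p, hp⟩ := List.length_eq_one_iff.mp h
    have hw : w.prod = of p.2 := by
      rw [word_prod_eq, hp, lprod_singleton]
    rw [hw, conj_pow, ← map_pow, hexp, map_one, mul_one, mul_inv_cancel]

lemma not_conjSmall_len_ge (x : CoprodI M) (hx : ¬ ConjSmall x) :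
    ∃ (c : CoprodI M) (w : Word M), 2 ≤ w.toList.length ∧
      w.toList.head?.map Sigma.fst ≠ w.toList.getLast?.map Sigma.fst ∧
      x = c * w.prod * c⁻¹ := by
  obtain ⟨c, w, hcyc, hconj⟩ := exists_cycred_conj x
  rcases hcyc with hlen | hne
  · exact absurd ⟨c, w, hlen, hconj⟩ hx
  · refine ⟨c, w, ?_, hne, hconj⟩
    by_contra hlt
    push_neg at hlt
    exact absurd ⟨c, w, by omega, hconj⟩ hx

/-- Main auxiliary theorem. -/
theorem key (n : ℕ) (hn : 0 < n) (hexp : ∀ (i : ι) (a : M i), a ^ n = 1)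
    (g : ℕ → CoprodI M) (hinj : Function.Injective g)
    (hsq : ∀ i : ℕ, g (i + 1) ^ 2 = g i) : False := by
  have hpow : ∀ m j : ℕ, g m = g (m + j) ^ 2 ^ j := by
    intro m j
    induction j with
    | zero => simp
    | succ j ih =>
      calc g m = g (m + j) ^ 2 ^ j := ih
        _ = (g (m + j + 1) ^ 2) ^ 2 ^ j := by rw [hsq (m + j)]
        _ = g (m + j + 1) ^ (2 * 2 ^ j) := by rw [← pow_mul]
        _ = g (m + (j + 1)) ^ 2 ^ (j + 1) := by
            rw [show m + (j + 1) = m + j + 1 from rfl, pow_succ, Nat.mul_comm]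
  by_cases hall : ∀ j : ℕ, ConjSmall (g j)
  · -- all conjugate into factors: pigeonhole
    have hord : g n ^ n = 1 := conjSmall_pow_eq_one n hexp (hall n)
    have hfin : IsOfFinOrder (g n) := isOfFinOrder_iff_pow_eq_one.mpr ⟨n, hn, hord⟩
    have hcard : Nat.card (Subgroup.zpowers (g n)) ≤ n := by
      rw [Nat.card_zpowers]
      exact Nat.le_of_dvd hn (orderOf_dvd_of_pow_eq_one hord)
    have hmem : ∀ k : Fin (n + 1), g k ∈ Subgroup.zpowers (g n) := by
      intro k
      have hk : (k : ℕ) + (n - k) = n := by omega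
      have := hpow k (n - k)
      rw [hk] at this
      rw [this]
      exact Subgroup.pow_mem _ (Subgroup.mem_zpowers _) _
    haveI hfin2 : Finite (Subgroup.zpowers (g n)) := hfin.finite_zpowers.to_subtype
    have hinj2 : Function.Injective (fun k : Fin (n + 1) =>
        (⟨g k, hmem k⟩ : Subgroup.zpowers (g n))) := by
      intro a b hab
      have hgab : g a = g b := congrArg Subtype.val hab
      exact Fin.ext (hinj hgab)
    have h5 := Nat.card_le_card_of_injective _ hinj2
    rw [Nat.card_eq_fintype_card, Fintype.card_fin] at h5
    omega
  · push_neg at hall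
    obtain ⟨m, hm⟩ := hall
    -- no g (m + j) is ConjSmall
    have hnotsmall : ∀ j : ℕ, ¬ ConjSmall (g (m + j)) := by
      intro j
      induction j with
      | zero => simpa using hm
      | succ j ih =>
        intro h
        apply ih
        have h2 : g (m + j) = g (m + j + 1) ^ 2 := (hsq (m + j)).symm
        rw [h2]
        exact conjSmall_sq h
    set D := len (g m) with hD
    set j := D + 1 with hj
    set N := 2 ^ j with hN
    have hgm : g m = g (m + j) ^ N := hpow m j
    obtain ⟨c, w, hwlen, hwcyc, hconj⟩ := not_conjSmall_len_ge (g (m + j)) (hnotsmall j)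
    have hNpos : 1 ≤ N := Nat.one_le_two_pow
    have hbound : ∀ K : ℕ, N * (K + 1) * w.toList.length ≤ (K + 1) * D + (len c⁻¹ + len c) := by
      intro K
      have h1 : w.prod ^ (N * (K + 1)) = c⁻¹ * g m ^ (K + 1) * c := by
        rw [hgm, hconj]
        rw [conj_pow, conj_pow]
        group
      have h2 : len (w.prod ^ (N * (K + 1))) = N * (K + 1) * w.toList.length := by
        have hNK : N * (K + 1) = (N * (K + 1) - 1) + 1 := by
          have : 1 ≤ N * (K + 1) := Nat.one_le_iff_ne_zero.mpr (by positivity)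
          omega
        rw [hNK, len_pow_of_cycred w hwlen hwcyc]
      rw [← h2, h1]
      calc len (c⁻¹ * g m ^ (K + 1) * c)
          ≤ len (c⁻¹ * g m ^ (K + 1)) + len c := len_mul_le _ _
        _ ≤ len c⁻¹ + len (g m ^ (K + 1)) + len c :=
            Nat.add_le_add_right (len_mul_le _ _) _
        _ ≤ len c⁻¹ + (K + 1) * len (g m) + len c :=
            Nat.add_le_add_right (Nat.add_le_add_left (len_pow_le _ _) _) _
        _ = (K + 1) * D + (len c⁻¹ + len c) := by rw [← hD]; ring
    have hNbig : D + 1 ≤ 2 * N := by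
      have : j < 2 ^ j := Nat.lt_two_pow_self
      omega
    set C := len c⁻¹ + len c with hC
    have := hbound C
    have h2w : 2 * (N * (C + 1)) ≤ N * (C + 1) * w.toList.length := by
      have := Nat.mul_le_mul_left (N * (C + 1)) hwlen
      omega
    nlinarith [this, h2w, hNbig]

end DecEq

end St13

/-- let `n > 2` and let `G = ∗_{i∈ι} G i` be the free product of a family of
groups each isomorphic to the cyclic group of order `n`. Then there is no injective sequence
`g : ℕ → G` with `g 0 ≠ 1` and `(g (i+1))² = g i` for all `i`. -/
theorem statement13 (n : ℕ) (hn : 2 < n) {ι : Type*} (G : ι → Type*) [∀ i, Group (G i)]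
    (hG : ∀ i, Nonempty (G i ≃* Multiplicative (ZMod n))) :
    ¬ ∃ g : ℕ → Monoid.CoprodI G,
        Function.Injective g ∧ g 0 ≠ 1 ∧ ∀ i : ℕ, (g (i + 1)) ^ 2 = g i := by
  classical
  rintro ⟨g, hinj, -, hsq⟩
  have hexp : ∀ (i : ι) (a : G i), a ^ n = 1 := by
    intro i a
    obtain ⟨e⟩ := hG i
    apply e.injective
    rw [map_pow, map_one]
    have : ∀ x : Multiplicative (ZMod n), x ^ n = 1 := by
      intro x
      have h0 : (n : ℕ) • (Multiplicative.toAdd x) = 0 := by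
        simp [nsmul_eq_mul, ZMod.natCast_self]
      calc x ^ n = Multiplicative.ofAdd ((n : ℕ) • Multiplicative.toAdd x) := by
            rw [ofAdd_nsmul, ofAdd_toAdd]
        _ = 1 := by rw [h0]; rfl
    exact this _
  exact St13.key n (by omega) hexp g hinj hsq
end

section
/- Let G = ∗_{i<ω} C_i be the free product of countably many copies of the cyclic group of order 2, and for each i < ω let x_i ∈ G denote the image of the generator of the i-th factor under the canonical injection. Then x₀ does not belong to the subgroup of G generated by { x_{i+1} · x_i · x_{i+1} : i < ω }. (Key claim in the verification of the Construction Principle CP(K, ∗) for free products of cyclic groups of order 2: Lemma 5.8, Case 1.) -/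
/-- The image in the free product `∗_{i<ω} C₂` of the generator of the `i`-th copy of the
cyclic group of order 2. -/
def cyclic2Gen (i : ℕ) : Monoid.CoprodI (fun _ : ℕ => Multiplicative (ZMod 2)) :=
  Monoid.CoprodI.of (M := fun _ : ℕ => Multiplicative (ZMod 2)) (i := i)
    (Multiplicative.ofAdd (1 : ZMod 2))

/-- The homomorphism `C₂ →* Perm ℕ` sending the generator to `swap i (i+1)`. -/
noncomputable def swapHom (i : ℕ) : Multiplicative (ZMod 2) →* Equiv.Perm ℕ :=
  AddMonoidHom.toMultiplicativeLeft
    (ZMod.lift 2 ⟨zmultiplesHom (Additive (Equiv.Perm ℕ)) (Additive.ofMul (Equiv.swap i (i+1))),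
      by
        rw [zmultiplesHom_apply]
        have : ((2:ℕ):ℤ) • Additive.ofMul (Equiv.swap i (i+1))
            = Additive.ofMul ((Equiv.swap i (i+1)) ^ ((2:ℕ):ℤ)) := rfl
        rw [this, ofMul_eq_zero, zpow_natCast, pow_two, Equiv.swap_mul_self]⟩)

lemma swapHom_gen (i : ℕ) :
    swapHom i (Multiplicative.ofAdd (1 : ZMod 2)) = Equiv.swap i (i+1) := by
  have h1 : (1 : ZMod 2) = ((1:ℤ) : ZMod 2) := by simp
  rw [swapHom, AddMonoidHom.coe_toMultiplicativeLeft, Function.comp_apply, Function.comp_apply]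
  simp only [toAdd_ofAdd, h1, ZMod.lift_coe, zmultiplesHom_apply]
  have : (1:ℤ) • Additive.ofMul (Equiv.swap i (i+1))
      = Additive.ofMul ((Equiv.swap i (i+1)) ^ (1:ℤ)) := rfl
  rw [this, toMul_ofMul, zpow_one]

/-- The subgroup of parity-preserving permutations of `ℕ`. -/
def paritySubgroup : Subgroup (Equiv.Perm ℕ) where
  carrier := {σ | ∀ n, σ n % 2 = n % 2}
  one_mem' := fun n => rfl
  mul_mem' := by
    intro a b ha hb n
    have := ha (b n)
    simpa [Equiv.Perm.mul_apply, hb n] using this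
  inv_mem' := by
    intro a ha n
    have := ha (a⁻¹ n)
    simpa using this.symm

lemma swap_two_apart_mem (i : ℕ) : Equiv.swap i (i+2) ∈ paritySubgroup := by
  intro n
  rcases eq_or_ne n i with rfl | h1
  · simp [Equiv.swap_apply_left]
  rcases eq_or_ne n (i+2) with rfl | h2
  · simp [Equiv.swap_apply_right]
  · rw [Equiv.swap_apply_of_ne_of_ne h1 h2]

/-- The homomorphism from the free product to `Perm ℕ` induced by the `swapHom`s. -/
noncomputable def phi : Monoid.CoprodI (fun _ : ℕ => Multiplicative (ZMod 2)) →* Equiv.Perm ℕ :=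
  Monoid.CoprodI.lift swapHom

lemma phi_gen (i : ℕ) : phi (cyclic2Gen i) = Equiv.swap i (i+1) := by
  rw [phi, cyclic2Gen, Monoid.CoprodI.lift_of, swapHom_gen]

/-- let `G = ∗_{i<ω} C i` be the free product of countably many copies of the
cyclic group of order 2, with `x i` the image of the generator of the `i`-th factor. Then
`x 0` is not in the subgroup generated by `{ x (i+1) * x i * x (i+1) : i < ω }`. -/
theorem statement14 :
    cyclic2Gen 0 ∉
      Subgroup.closure
        {y : Monoid.CoprodI (fun _ : ℕ => Multiplicative (ZMod 2)) |
          ∃ i : ℕ, y = cyclic2Gen (i + 1) * cyclic2Gen i * cyclic2Gen (i + 1)} := by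
  intro hmem
  have hsub : Subgroup.closure
        {y : Monoid.CoprodI (fun _ : ℕ => Multiplicative (ZMod 2)) |
          ∃ i : ℕ, y = cyclic2Gen (i + 1) * cyclic2Gen i * cyclic2Gen (i + 1)}
      ≤ paritySubgroup.comap phi := by
    rw [Subgroup.closure_le]
    rintro y ⟨i, rfl⟩
    have hconj : phi (cyclic2Gen (i + 1) * cyclic2Gen i * cyclic2Gen (i + 1))
        = Equiv.swap i (i+2) := by
      rw [map_mul, map_mul, phi_gen, phi_gen]
      ext n
      simp only [Equiv.Perm.mul_apply, Equiv.swap_apply_def]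
      split_ifs <;> omega
    show phi _ ∈ paritySubgroup
    rw [hconj]
    exact swap_two_apart_mem i
  have h0 := hsub hmem
  have : phi (cyclic2Gen 0) ∈ paritySubgroup := h0
  rw [phi_gen] at this
  have := this 0
  simp [Equiv.swap_apply_left] at this
end

section
/- Let p be a prime and R an additive subgroup of ℚ with 1 ∈ R. In the additive group of finitely supported functions ℕ → ℚ, let B = ⊕_ℕ R (the subgroup of functions all of whose values lie in R), let e_j denote the function with value 1 at j and 0 elsewhere, and let A be the subgroup of B generated by { r·e_j − (p·r)·e_{j+1} : r ∈ R, j ∈ ℕ }. Then in the quotient group B/A the coset e₀ + A is nonzero and, for every k ∈ ℕ, there is y ∈ B/A with p^k · y = e₀ + A; that is, e₀ + A is a nonzero element of infinite p-height in B/A. (Key computation in the proof of Lemma 5.13.) -/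
/-- `⊕_ι R`: the additive subgroup of the finitely supported functions `ι →₀ ℚ` consisting of
those functions all of whose values lie in `R`. -/
noncomputable def rSum (R : AddSubgroup ℚ) (ι : Type*) : AddSubgroup (ι →₀ ℚ) where
  carrier := {f | ∀ a, f a ∈ R}
  zero_mem' := by intro a; simpa using R.zero_mem
  add_mem' := by intro f g hf hg a; simpa using R.add_mem (hf a) (hg a)
  neg_mem' := by intro f hf a; simpa using R.neg_mem (hf a)

theorem single_one_mem_rSum (R : AddSubgroup ℚ) (hR : (1 : ℚ) ∈ R) (j : ℕ) :
    Finsupp.single j (1 : ℚ) ∈ rSum R ℕ := by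
  intro a
  rw [Finsupp.single_apply]
  split
  · exact hR
  · exact R.zero_mem

/-- The subgroup of `B = ⊕_ℕ R` generated by the elements `r·e_j − (p·r)·e_{j+1}`
for `r ∈ R` and `j ∈ ℕ`. -/
noncomputable def relSubgroup (p : ℕ) (R : AddSubgroup ℚ) : AddSubgroup (rSum R ℕ) :=
  AddSubgroup.closure
    {x : rSum R ℕ | ∃ r ∈ R, ∃ j : ℕ,
      (x : ℕ →₀ ℚ) = Finsupp.single j r - Finsupp.single (j + 1) ((p : ℚ) * r)}


lemma single_mem_rSum (R : AddSubgroup ℚ) {r : ℚ} (hr : r ∈ R) (j : ℕ) :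
    Finsupp.single j r ∈ rSum R ℕ := by
  intro a
  rw [Finsupp.single_apply]
  split
  · exact hr
  · exact R.zero_mem

/-- in the quotient `B/A` of `B = ⊕_ℕ R` by the subgroup `A` generated by the
elements `r·e_j − (p·r)·e_{j+1}`, the coset `e₀ + A` is a nonzero element of infinite
`p`-height: it is nonzero and for every `k` the equation `p^k · y = e₀ + A` is solvable. -/
theorem statement16 (p : ℕ) (hp : p.Prime) (R : AddSubgroup ℚ) (hR : (1 : ℚ) ∈ R) :
    (QuotientAddGroup.mk (⟨Finsupp.single 0 (1 : ℚ), single_one_mem_rSum R hR 0⟩ : rSum R ℕ) :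
        (rSum R ℕ) ⧸ relSubgroup p R) ≠ 0 ∧
      ∀ k : ℕ, ∃ y : (rSum R ℕ) ⧸ relSubgroup p R,
        (p ^ k : ℕ) • y =
          QuotientAddGroup.mk
            (⟨Finsupp.single 0 (1 : ℚ), single_one_mem_rSum R hR 0⟩ : rSum R ℕ) := by
  
  classical
  set A := relSubgroup p R with hA
  have hp0 : (p : ℚ) ≠ 0 := by exact_mod_cast hp.ne_zero
  -- the evaluation homomorphism f ↦ ∑ f j / p^j
  let φ : (ℕ →₀ ℚ) →+ ℚ :=
    Finsupp.liftAddHom fun j => AddMonoidHom.mulRight (((p : ℚ) ^ j)⁻¹)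
  have hφs : ∀ (j : ℕ) (q : ℚ), φ (Finsupp.single j q) = q * ((p : ℚ) ^ j)⁻¹ := by
    intro j q
    simp [φ]
  let ψ : (rSum R ℕ) →+ ℚ := φ.comp (rSum R ℕ).subtype
  have hAker : A ≤ ψ.ker := by
    rw [hA, relSubgroup]
    apply AddSubgroup.closure_le _ |>.2
    rintro x ⟨r, hr, j, hx⟩
    simp only [SetLike.mem_coe, AddMonoidHom.mem_ker]
    show φ (x : ℕ →₀ ℚ) = 0
    rw [hx, map_sub, hφs, hφs]
    field_simp
    ring
  -- the elements e_k
  let e : ℕ → rSum R ℕ := fun k => ⟨Finsupp.single k (1 : ℚ), single_one_mem_rSum R hR k⟩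
  have hrel : ∀ k : ℕ, (p ^ k : ℕ) • e k - e 0 ∈ A := by
    intro k
    induction k with
    | zero => simpa using A.zero_mem
    | succ k ih =>
      have hg : e k - (p : ℕ) • e (k + 1) ∈ A := by
        apply AddSubgroup.subset_closure
        refine ⟨1, hR, k, ?_⟩
        push_cast
        simp [e, Finsupp.smul_single]
      have key : (p ^ (k+1) : ℕ) • e (k+1) - e 0
          = (-((p ^ k : ℕ) • (e k - (p : ℕ) • e (k+1)))) + ((p ^ k : ℕ) • e k - e 0) := by
        rw [smul_sub, smul_smul, pow_succ]
        abel
      rw [key]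
      exact A.add_mem (A.neg_mem (A.nsmul_mem hg _)) ih
  constructor
  · intro h
    rw [QuotientAddGroup.eq_zero_iff] at h
    have := hAker h
    rw [AddMonoidHom.mem_ker] at this
    have h1 : ψ (e 0) = 1 := by
      show φ (Finsupp.single 0 (1:ℚ)) = 1
      rw [hφs]; simp
    exact one_ne_zero (h1 ▸ this)
  · intro k
    refine ⟨QuotientAddGroup.mk (e k), ?_⟩
    show QuotientAddGroup.mk ((p ^ k : ℕ) • e k) = _
    rw [QuotientAddGroup.eq]
    have := hrel k
    rwa [show -((p ^ k : ℕ) • e k) + e 0 = -((p ^ k : ℕ) • e k - e 0) by abel, neg_mem_iff]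
end
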